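/- arXiv:2002.06876 — 11 statements merged into one kernel-verified Lean document; each statement's English description precedes it below -/
import Mathlib

section
/- Let T1 with weight w1 and T2 with weight w2 be weighted trees whose weights are strictly positive. Then a bijection f : V(T1) → V(T2) is an isometry of the metric spaces (V(T1), d_{w1}) and (V(T2), d_{w2}) if and only if f is an isomorphism of the weighted trees T1(w1) and T2(w2). -/
open SimpleGraph

noncomputable section

variable {V : Type*}

/-- The degree of a vertex of a graph. -/
def vdeg (G : SimpleGraph V) (v : V) : ℕ := Nat.card (G.neighborSet v)

/- The out-degree of a vertex `v` of the tree `G` rooted at `r`: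
`δ⁺(v) = δ(v)` if `v = r` and `δ⁺(v) = δ(v) - 1` otherwise. -/
open Classical in
def outDeg (G : SimpleGraph V) (r v : V) : ℕ :=
  if v = r then vdeg G v else vdeg G v - 1

/-- `v` is a direct successor of `u` in the tree `G` rooted at `r`:
`u` and `v` are adjacent and `u` lies on the path joining `v` and `r`. -/
def DirectSucc (G : SimpleGraph V) (r u v : V) : Prop :=
  G.Adj u v ∧ ∃ p : G.Walk v r, p.IsPath ∧ u ∈ p.support

/-- A labeling `l` of the tree `G` rooted at `r` is monotone if `l⁻¹(0) = V₀⁺(T)`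
and `l v < l u` whenever `v` is a direct successor of `u`. -/
def MonotoneLabeling (G : SimpleGraph V) (r : V) (l : V → NNReal) : Prop :=
  (∀ v, l v = 0 ↔ outDeg G r v = 0) ∧
    ∀ u v, DirectSucc G r u v → l v < l u

/-- A weight `w` on the tree `G` rooted at `r` is equidistant if it is strictly positive
on the edges and there is a constant `K` such that for every `u ∈ V₀⁺(T)`, the sum of
the weights of the edges of the path joining `r` and `u` equals `K`. -/
def EquidistantWeight (G : SimpleGraph V) (r : V) (w : Sym2 V → NNReal) : Prop :=
  (∀ e ∈ G.edgeSet, 0 < w e) ∧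
    ∃ K : NNReal, ∀ u, outDeg G r u = 0 →
      ∀ p : G.Walk r u, p.IsPath → (p.edges.map w).sum = K

/-- `d` is a metric on the set `A`. -/
def IsMetricOn (d : V → V → NNReal) (A : Set V) : Prop :=
  (∀ x ∈ A, ∀ y ∈ A, (d x y = 0 ↔ x = y)) ∧
  (∀ x ∈ A, ∀ y ∈ A, d x y = d y x) ∧
  (∀ x ∈ A, ∀ y ∈ A, ∀ z ∈ A, d x y ≤ d x z + d z y)

/-- `d` is an ultrametric on the set `A`: a metric satisfying the strong triangle
inequality. -/
def IsUltrametricOn (d : V → V → NNReal) (A : Set V) : Prop :=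
  IsMetricOn d A ∧ ∀ x ∈ A, ∀ y ∈ A, ∀ z ∈ A, d x y ≤ max (d x z) (d z y)


section TreeMetricAux

variable {W : Type*} {G : SimpleGraph W} {w : Sym2 W → NNReal} {d : W → W → NNReal}

lemma tmAux_self (hd : ∀ u v, ∀ p : G.Walk u v, p.IsPath → d u v = (p.edges.map w).sum)
    (u : W) : d u u = 0 := by
  have := hd u u SimpleGraph.Walk.nil (by simp)
  simpa using this

lemma tmAux_symm (hG : G.IsTree)
    (hd : ∀ u v, ∀ p : G.Walk u v, p.IsPath → d u v = (p.edges.map w).sum)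
    (u v : W) : d u v = d v u := by
  obtain ⟨p, hp, -⟩ := hG.existsUnique_path u v
  rw [hd u v p hp, hd v u p.reverse hp.reverse, SimpleGraph.Walk.edges_reverse,
    List.map_reverse, List.sum_reverse]

lemma tmAux_pos (hG : G.IsTree) (hw : ∀ e ∈ G.edgeSet, 0 < w e)
    (hd : ∀ u v, ∀ p : G.Walk u v, p.IsPath → d u v = (p.edges.map w).sum)
    {u v : W} (huv : u ≠ v) : 0 < d u v := by
  obtain ⟨p, hp, -⟩ := hG.existsUnique_path u v
  rw [hd u v p hp]
  cases p with
  | nil => exact absurd rfl huv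
  | cons h q =>
    rename_i b
    have he : s(u, b) ∈ G.edgeSet := h
    calc (0 : NNReal) < w s(u, b) := hw _ he
      _ ≤ (((SimpleGraph.Walk.cons h q).edges).map w).sum := by
          apply List.single_le_sum (fun x _ => zero_le)
          simp

lemma tmAux_eq_zero_iff (hG : G.IsTree) (hw : ∀ e ∈ G.edgeSet, 0 < w e)
    (hd : ∀ u v, ∀ p : G.Walk u v, p.IsPath → d u v = (p.edges.map w).sum)
    {u v : W} : d u v = 0 ↔ u = v := by
  constructor
  · intro h
    by_contra hne
    exact absurd h (tmAux_pos hG hw hd hne).ne'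
  · rintro rfl; exact tmAux_self hd u

lemma tmAux_split (hd : ∀ u v, ∀ p : G.Walk u v, p.IsPath → d u v = (p.edges.map w).sum)
    {u v z : W} (p : G.Walk u v) (hp : p.IsPath) (hz : z ∈ p.support) :
    d u v = d u z + d z v := by
  classical
  rw [hd u v p hp, hd u z (p.takeUntil z hz) (hp.takeUntil hz),
    hd z v (p.dropUntil z hz) (hp.dropUntil hz)]
  conv_lhs => rw [← SimpleGraph.Walk.take_spec p hz]
  rw [SimpleGraph.Walk.edges_append, List.map_append, List.sum_append]

lemma tmAux_adj_weight (hd : ∀ u v, ∀ p : G.Walk u v, p.IsPath → d u v = (p.edges.map w).sum)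
    {u v : W} (h : G.Adj u v) : d u v = w s(u, v) := by
  have := hd u v (SimpleGraph.Walk.cons h SimpleGraph.Walk.nil) (by simp [h.ne])
  simpa using this

/-- Metric characterization of adjacency in a weighted tree. -/
lemma tmAux_adj_iff (hG : G.IsTree) (hw : ∀ e ∈ G.edgeSet, 0 < w e)
    (hd : ∀ u v, ∀ p : G.Walk u v, p.IsPath → d u v = (p.edges.map w).sum)
    (u v : W) :
    G.Adj u v ↔ (u ≠ v ∧ ∀ z, d u z + d z v = d u v → z = u ∨ z = v) := by
  constructor
  · intro h
    refine ⟨h.ne, fun z hz => ?_⟩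
    obtain ⟨p, hp, -⟩ := hG.existsUnique_path u z
    by_cases hv : v ∈ p.support
    · right
      have hsplit : d u z = d u v + d v z := tmAux_split hd p hp hv
      have hsym : d z v = d v z := tmAux_symm hG hd z v
      rw [hsplit, hsym] at hz
      -- d u v + d v z + d v z = d u v
      have h0 : d v z = 0 := by
        have h' : d u v + (d v z + d v z) = d u v + 0 := by
          rw [add_zero, ← add_assoc]; exact hz
        have := add_left_cancel h'
        exact (add_eq_zero.mp this).1
      exact (tmAux_eq_zero_iff hG hw hd).mp ((tmAux_symm hG hd z v).trans h0)
    · left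
      -- path from z to v through u
      have hvr : v ∉ p.reverse.support := by
        simpa using hv
      have hq : (p.reverse.concat h).IsPath := by
        rw [SimpleGraph.Walk.isPath_def, SimpleGraph.Walk.support_concat,
          List.nodup_append']
        refine ⟨hp.reverse.support_nodup, List.nodup_singleton v, ?_⟩
        intro x hx1 hx2
        simp only [List.mem_singleton] at hx2
        subst hx2
        exact hvr hx1
      have hzv : d z v = d z u + d u v := by
        rw [hd z v (p.reverse.concat h) hq, SimpleGraph.Walk.edges_concat,
          List.concat_eq_append, List.map_append, List.sum_append,
          ← hd z u p.reverse hp.reverse]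
        simp [tmAux_adj_weight hd h]
      rw [hzv, tmAux_symm hG hd z u] at hz
      have h0 : d u z = 0 := by
        have h' : (d u z + d u z) + d u v = 0 + d u v := by
          rw [zero_add, add_assoc]; exact hz
        have := add_right_cancel h'
        exact (add_eq_zero.mp this).1
      exact ((tmAux_eq_zero_iff hG hw hd).mp ((tmAux_symm hG hd z u) ▸ h0)).symm
  · rintro ⟨hne, hcrit⟩
    obtain ⟨p, hp, -⟩ := hG.existsUnique_path u v
    cases p with
    | nil => exact absurd rfl hne
    | cons h q =>
      rename_i b
      have hb : b ∈ (SimpleGraph.Walk.cons h q).support := by simp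
      have := hcrit b (tmAux_split hd _ hp hb).symm
      rcases this with rfl | rfl
      · exact absurd rfl h.ne
      · exact h

end TreeMetricAux

/-- For weighted trees `T₁(w₁)`, `T₂(w₂)` with strictly positive weights,
a bijection `f : V(T₁) → V(T₂)` is an isometry of `(V(T₁), d_{w₁})` and `(V(T₂), d_{w₂})`
if and only if it is an isomorphism of the weighted trees. -/
theorem stmt0_isometry_iff_isomorphism_of_weighted_trees
    {V1 V2 : Type*} [Fintype V1] [Fintype V2]
    (G1 : SimpleGraph V1) (G2 : SimpleGraph V2)
    (hG1 : G1.IsTree) (hG2 : G2.IsTree)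
    (w1 : Sym2 V1 → NNReal) (w2 : Sym2 V2 → NNReal)
    (hw1 : ∀ e ∈ G1.edgeSet, 0 < w1 e) (hw2 : ∀ e ∈ G2.edgeSet, 0 < w2 e)
    (d1 : V1 → V1 → NNReal) (d2 : V2 → V2 → NNReal)
    (hd1 : ∀ u v, ∀ p : G1.Walk u v, p.IsPath → d1 u v = (p.edges.map w1).sum)
    (hd2 : ∀ u v, ∀ p : G2.Walk u v, p.IsPath → d2 u v = (p.edges.map w2).sum)
    (f : V1 → V2) (hf : Function.Bijective f) :
    (∀ x y, d2 (f x) (f y) = d1 x y) ↔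
      ((∀ u v, G1.Adj u v ↔ G2.Adj (f u) (f v)) ∧
        ∀ u v, G1.Adj u v → w2 s(f u, f v) = w1 s(u, v)) := by
  constructor
  · intro hiso
    have key : ∀ u v, G1.Adj u v ↔ G2.Adj (f u) (f v) := by
      intro u v
      rw [tmAux_adj_iff hG1 hw1 hd1, tmAux_adj_iff hG2 hw2 hd2]
      constructor
      · rintro ⟨hne, hcrit⟩
        refine ⟨fun hfe => hne (hf.1 hfe), fun z2 hz2 => ?_⟩
        obtain ⟨z, rfl⟩ := hf.2 z2
        rw [hiso, hiso, hiso] at hz2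
        rcases hcrit z hz2 with rfl | rfl
        · exact Or.inl rfl
        · exact Or.inr rfl
      · rintro ⟨hne, hcrit⟩
        refine ⟨fun he => hne (he ▸ rfl), fun z hz => ?_⟩
        have := hcrit (f z) (by rw [hiso, hiso, hiso]; exact hz)
        rcases this with h | h
        · exact Or.inl (hf.1 h)
        · exact Or.inr (hf.1 h)
    refine ⟨key, fun u v huv => ?_⟩
    have h2 : G2.Adj (f u) (f v) := (key u v).mp huv
    rw [← tmAux_adj_weight hd2 h2, ← tmAux_adj_weight hd1 huv, hiso]
  · rintro ⟨hadj, hwt⟩ x y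
    obtain ⟨p, hp, -⟩ := hG1.existsUnique_path x y
    let hom : G1 →g G2 := ⟨f, fun {a b} h => (hadj a b).mp h⟩
    have hq : (p.map hom).IsPath :=
      SimpleGraph.Walk.map_isPath_of_injective hf.1 hp
    rw [hd1 x y p hp, hd2 (f x) (f y) (p.map hom) hq,
      SimpleGraph.Walk.edges_map, List.map_map]
    congr 1
    apply List.map_congr_left
    intro e he
    have heE : e ∈ G1.edgeSet := SimpleGraph.Walk.edges_subset_edgeSet p he
    induction e with
    | _ a b =>
      have hab : G1.Adj a b := heE
      simpa [hom] using hwt a b hab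
end
end

section
/- Let (X, d) be a finite metric space and let T1 with weight w1 and T2 with weight w2 be weighted trees with strictly positive weights such that X = V(T1) = V(T2). If d = d_{w1} = d_{w2}, then T1 = T2 as graphs and w1 = w2, i.e. the two weighted trees coincide. -/
open SimpleGraph

noncomputable section

variable {V : Type*}

section AuxLemmas

open SimpleGraph Walk

variable {V : Type*}

private lemma aux_sum_le_of_subperm (w : Sym2 V → NNReal) {l1 l2 : List (Sym2 V)}
    (h : l1.Subperm l2) : (l1.map w).sum ≤ (l2.map w).sum := by
  obtain ⟨l, hperm, hsub⟩ := h
  calc (l1.map w).sum = (l.map w).sum := ((hperm.map w).sum_eq).symm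
    _ ≤ (l2.map w).sum := (hsub.map w).sum_le_sum (fun _ _ => zero_le)

private lemma aux_mem_support_of_dist_eq
    {G : SimpleGraph V} (hG : G.IsTree)
    {w : Sym2 V → NNReal} (hw : ∀ e ∈ G.edgeSet, 0 < w e)
    {d : V → V → NNReal}
    (hd : ∀ u v, ∀ p : G.Walk u v, p.IsPath → d u v = (p.edges.map w).sum)
    {u v z : V} {p : G.Walk u v} (hp : p.IsPath)
    (heq : d u z + d z v = d u v) : z ∈ p.support := by
  classical
  by_contra hz
  have hzv : z ≠ v := fun h => hz (h ▸ p.end_mem_support)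
  -- paths from u to z and from z to v
  obtain ⟨q0⟩ := hG.isConnected.preconnected u z
  obtain ⟨r0⟩ := hG.isConnected.preconnected z v
  set q := q0.bypass with hqdef
  set r := r0.bypass with hrdef
  have hq : q.IsPath := q0.bypass_isPath
  have hr : r.IsPath := r0.bypass_isPath
  obtain ⟨b, hadj, r', hr'⟩ := r.exists_eq_cons_of_ne hzv
  set e : Sym2 V := s(z, b) with hedef
  have heR : e ∈ r.edges := by rw [hr']; simp [hedef]
  -- p is the unique path from u to v
  have hpuniq := hG.existsUnique_path u v
  obtain ⟨P, hP, hPuniq⟩ := hpuniq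
  have hpP : p = P := hPuniq p hp
  have hbypass : (q.append r).bypass = P := hPuniq _ (q.append r).bypass_isPath
  have hsubset : p.edges ⊆ (q.append r).edges := by
    rw [hpP, ← hbypass]; exact (q.append r).edges_bypass_subset
  have henotp : e ∉ p.edges := fun h => hz (p.fst_mem_support_of_mem_edges h)
  have hnodup : (e :: p.edges).Nodup := List.nodup_cons.2 ⟨henotp, hp.edges_nodup⟩
  have hsub2 : (e :: p.edges) ⊆ (q.append r).edges := by
    intro x hx
    rcases List.mem_cons.1 hx with h | h
    · subst h
      rw [edges_append, List.mem_append]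
      exact Or.inr heR
    · exact hsubset h
  have hsum := aux_sum_le_of_subperm w (List.subperm_of_subset hnodup hsub2)
  rw [List.map_cons, List.sum_cons, edges_append, List.map_append, List.sum_append] at hsum
  rw [← hd u z q hq, ← hd z v r hr, heq, ← hd u v p hp] at hsum
  have hwe : 0 < w e := hw e (r.edges_subset_edgeSet heR)
  have : w e = 0 := by
    have := add_le_iff_nonpos_left.1 hsum
    exact le_antisymm this zero_le
  exact absurd this hwe.ne'

private lemma aux_dist_eq_of_mem_support
    {G : SimpleGraph V}
    {w : Sym2 V → NNReal} {d : V → V → NNReal}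
    (hd : ∀ u v, ∀ p : G.Walk u v, p.IsPath → d u v = (p.edges.map w).sum)
    {u v z : V} {p : G.Walk u v} (hp : p.IsPath)
    (hz : z ∈ p.support) : d u z + d z v = d u v := by
  classical
  have hspec := p.take_spec hz
  have h1 := hd u z (p.takeUntil z hz) (hp.takeUntil hz)
  have h2 := hd z v (p.dropUntil z hz) (hp.dropUntil hz)
  have h3 := hd u v p hp
  rw [h1, h2, h3]
  have h4 := congrArg (fun q : G.Walk u v => (List.map w q.edges).sum) hspec
  simp only [Walk.edges_append, List.map_append, List.sum_append] at h4
  exact h4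

private lemma aux_adj_iff
    {G : SimpleGraph V} (hG : G.IsTree)
    {w : Sym2 V → NNReal} (hw : ∀ e ∈ G.edgeSet, 0 < w e)
    {d : V → V → NNReal}
    (hd : ∀ u v, ∀ p : G.Walk u v, p.IsPath → d u v = (p.edges.map w).sum)
    (u v : V) :
    G.Adj u v ↔ u ≠ v ∧ ∀ z, d u z + d z v = d u v → z = u ∨ z = v := by
  classical
  constructor
  · intro h
    refine ⟨h.ne, fun z hz => ?_⟩
    have hp : (Walk.cons h Walk.nil : G.Walk u v).IsPath := by
      simp [Walk.isPath_def, h.ne]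
    have := aux_mem_support_of_dist_eq hG hw hd hp hz
    simpa using this
  · rintro ⟨hne, hz⟩
    obtain ⟨p0⟩ := hG.isConnected.preconnected u v
    set p := p0.bypass with hpdef
    have hp : p.IsPath := p0.bypass_isPath
    obtain ⟨b, hadj, q, hq⟩ := p.exists_eq_cons_of_ne hne
    have hbsup : b ∈ p.support := by rw [hq]; simp [q.start_mem_support]
    have hbd := aux_dist_eq_of_mem_support hd hp hbsup
    rcases hz b hbd with h | h
    · exfalso
      have : u ∉ q.support := by
        have := hp
        rw [hq, Walk.cons_isPath_iff] at this
        exact this.2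
      exact this (h ▸ q.start_mem_support)
    · exact h ▸ hadj

end AuxLemmas

/-- If two weighted trees with strictly positive weights on the same vertex
set `X` generate the same additive metric `d`, then the two weighted trees coincide:
the trees are equal as graphs and the weights agree on the edges. -/
theorem stmt1_weighted_trees_coincide_of_same_metric
    {V : Type*} [Fintype V]
    (G1 G2 : SimpleGraph V) (hG1 : G1.IsTree) (hG2 : G2.IsTree)
    (w1 w2 : Sym2 V → NNReal)
    (hw1 : ∀ e ∈ G1.edgeSet, 0 < w1 e) (hw2 : ∀ e ∈ G2.edgeSet, 0 < w2 e)
    (d : V → V → NNReal)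
    (hd1 : ∀ u v, ∀ p : G1.Walk u v, p.IsPath → d u v = (p.edges.map w1).sum)
    (hd2 : ∀ u v, ∀ p : G2.Walk u v, p.IsPath → d u v = (p.edges.map w2).sum) :
    G1 = G2 ∧ ∀ e ∈ G1.edgeSet, w1 e = w2 e := by

  have key1 := fun u v => aux_adj_iff hG1 hw1 hd1 u v
  have key2 := fun u v => aux_adj_iff hG2 hw2 hd2 u v
  have hGeq : G1 = G2 := by
    ext u v
    rw [key1, key2]
  refine ⟨hGeq, fun e he => ?_⟩
  induction e with
  | _ u v =>
    have h1 : G1.Adj u v := G1.mem_edgeSet.1 he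
    have h2 : G2.Adj u v := hGeq ▸ h1
    have hp1 : (Walk.cons h1 Walk.nil : G1.Walk u v).IsPath := by
      simp [Walk.isPath_def, h1.ne]
    have hp2 : (Walk.cons h2 Walk.nil : G2.Walk u v).IsPath := by
      simp [Walk.isPath_def, h2.ne]
    have e1 := hd1 u v _ hp1
    have e2 := hd2 u v _ hp2
    simp only [Walk.edges_cons, Walk.edges_nil, List.map_cons, List.map_nil,
      List.sum_cons, List.sum_nil, add_zero] at e1 e2
    rw [← e1, ← e2]
end
end

section
/- Let T be a tree with labeling l : V(T) → ℝ≥0 and let d_l be defined by d_l(u,u) = 0 and d_l(u,v) = max_{v* ∈ V(P)} l(v*) for u ≠ v, where P is the unique path joining u and v in T. Then the following are equivalent: (1) d_l is an ultrametric on V(T); (2) d_l is a metric on V(T); (3) max{l(u), l(v)} > 0 holds for every edge {u,v} ∈ E(T). -/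
open SimpleGraph

noncomputable section

variable {V : Type*}

lemma le_mfold {V : Type*} (l : V → NNReal) {s : List V} {a : V} (h : a ∈ s) :
    l a ≤ (s.map l).foldr max 0 := by
  induction s with
  | nil => simp at h
  | cons b t ih =>
    simp only [List.map_cons, List.foldr_cons]
    rcases List.mem_cons.mp h with rfl | h
    · exact le_max_left _ _
    · exact le_trans (ih h) (le_max_right _ _)

lemma mfold_le {V : Type*} (l : V → NNReal) {s : List V} {c : NNReal}
    (h : ∀ a ∈ s, l a ≤ c) : (s.map l).foldr max 0 ≤ c := by
  induction s with
  | nil => simp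
  | cons b t ih =>
    simp only [List.map_cons, List.foldr_cons, max_le_iff]
    exact ⟨h b (.head t), ih fun a ha => h a (.tail b ha)⟩

/-- For a labeled tree `T(l)` and `d_l` defined via maxima of labels along
the unique paths, the following are equivalent: (1) `d_l` is an ultrametric;
(2) `d_l` is a metric; (3) `max {l u, l v} > 0` for every edge `{u, v}`. -/
theorem stmt4_dl_ultrametric_iff_metric_iff_pos_on_edges
    {V : Type*} [Fintype V] (G : SimpleGraph V) (hG : G.IsTree)
    (l : V → NNReal) (d : V → V → NNReal)
    (hd0 : ∀ u, d u u = 0)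
    (hd : ∀ u v, u ≠ v → ∀ p : G.Walk u v, p.IsPath →
      d u v = (p.support.map l).foldr max 0) :
    (IsUltrametricOn d Set.univ ↔ IsMetricOn d Set.univ) ∧
    (IsMetricOn d Set.univ ↔ ∀ u v, G.Adj u v → 0 < max (l u) (l v)) := by
  classical
  have hpath : ∀ u v : V, ∃ p : G.Walk u v, p.IsPath := by
    intro u v
    obtain ⟨w⟩ := hG.isConnected.preconnected u v
    exact ⟨w.toPath, w.toPath.2⟩
  have met3 : IsMetricOn d Set.univ → ∀ u v, G.Adj u v → 0 < max (l u) (l v) := by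
    intro hm u v hadj
    by_contra hle
    have hmax : max (l u) (l v) = 0 := le_antisymm (not_lt.mp hle) zero_le
    have hne := hadj.ne
    have hp : (Walk.cons hadj Walk.nil).IsPath := by
      simp [Walk.isPath_def, hne]
    have hduv : d u v = 0 := by
      rw [hd u v hne _ hp]
      apply le_antisymm _ zero_le
      apply mfold_le
      intro a ha
      simp only [Walk.support_cons, Walk.support_nil, List.mem_cons,
        List.mem_singleton, List.not_mem_nil, or_false] at ha
      rcases ha with rfl | rfl
      · exact le_trans (le_max_left _ (l v)) hmax.le
      · exact le_trans (le_max_right (l u) _) hmax.le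
    exact hne ((hm.1 u trivial v trivial).mp hduv)
  have key : (∀ u v, G.Adj u v → 0 < max (l u) (l v)) → IsUltrametricOn d Set.univ := by
    intro h3
    have hsym : ∀ x y, d x y = d y x := by
      intro x y
      by_cases hxy : x = y
      · subst hxy; rfl
      · obtain ⟨p, hp⟩ := hpath x y
        rw [hd x y hxy p hp, hd y x (Ne.symm hxy) p.reverse hp.reverse,
          Walk.support_reverse]
        apply le_antisymm <;>
          exact mfold_le _ fun a ha => le_mfold _ (by simpa using ha)
    have hpos : ∀ x y, x ≠ y → 0 < d x y := by
      intro x y hxy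
      obtain ⟨p, hp⟩ := hpath x y
      rw [hd x y hxy p hp]
      cases p with
      | nil => exact absurd rfl hxy
      | cons hadj q =>
        rcases lt_max_iff.mp (h3 _ _ hadj) with h' | h'
        · exact lt_of_lt_of_le h' (le_mfold l (Walk.start_mem_support _))
        · refine lt_of_lt_of_le h' (le_mfold l ?_)
          rw [Walk.support_cons]
          exact List.mem_cons_of_mem _ q.start_mem_support
    have hzero : ∀ x y, d x y = 0 ↔ x = y := fun x y =>
      ⟨fun h => by_contra fun hne => (hpos x y hne).ne' h, fun h => h ▸ hd0 x⟩
    have hstrong : ∀ x y z, d x y ≤ max (d x z) (d z y) := by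
      intro x y z
      by_cases hxy : x = y
      · subst hxy; simp [hd0]
      by_cases hxz : x = z
      · subst hxz; simp [hd0]
      by_cases hzy : z = y
      · subst hzy; simp [hd0]
      obtain ⟨p, hp⟩ := hpath x z
      obtain ⟨q, hq⟩ := hpath z y
      rw [hd x y hxy ((p.append q).toPath : G.Walk x y) (p.append q).toPath.2,
        hd x z hxz p hp, hd z y hzy q hq]
      apply mfold_le
      intro a ha
      have haw : a ∈ (p.append q).support :=
        Walk.support_toPath_subset (p.append q) ha
      rcases (Walk.mem_support_append_iff p q).mp haw with h | h
      · exact le_max_of_le_left (le_mfold l h)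
      · exact le_max_of_le_right (le_mfold l h)
    have hmet : IsMetricOn d Set.univ :=
      ⟨fun x _ y _ => hzero x y, fun x _ y _ => hsym x y,
        fun x _ y _ z _ => le_trans (hstrong x y z) (max_le le_self_add le_add_self)⟩
    exact ⟨hmet, fun x _ y _ z _ => hstrong x y z⟩
  exact ⟨⟨fun h => h.1, fun h => key (met3 h)⟩, ⟨met3, fun h => (key h).1⟩⟩
end
end

section
/- For every connected finite graph G with a labeling l : V(G) → ℝ≥0 there is a spanning tree T of G such that the function d_l built from the restriction of l to V(T) (using unique paths in T) equals ρ_l on V(G) × V(G), i.e. ρ_l(u,v) = d_l(u,v) for all u, v ∈ V(G). -/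
open SimpleGraph

noncomputable section

variable {V : Type*}

namespace Stmt6Aux

lemma foldr_max_le (L : List NNReal) (c : NNReal) (h : ∀ x ∈ L, x ≤ c) :
    L.foldr max 0 ≤ c := by
  induction L with
  | nil => simp
  | cons a t ih =>
    simpa using max_le (h a (by simp)) (ih fun x hx => h x (by simp [hx]))

lemma le_foldr_max {x : NNReal} {L : List NNReal} (h : x ∈ L) : x ≤ L.foldr max 0 := by
  induction L with
  | nil => simp at h
  | cons a t ih =>
    rcases List.mem_cons.1 h with rfl | h
    · exact le_max_left _ _
    · exact le_trans (ih h) (le_max_right _ _)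

lemma exists_succ_edge {G' : SimpleGraph V} {z : V} :
    ∀ {u v : V} (p : G'.Walk u v), z ∈ p.support → z ≠ v → ∃ z', s(z, z') ∈ p.edges := by
  intro u v p
  induction p with
  | nil =>
    intro hz hzv
    simp only [Walk.support_nil, List.mem_singleton] at hz
    exact absurd hz hzv
  | @cons a b c h q ih =>
    intro hz hzv
    rw [Walk.support_cons, List.mem_cons] at hz
    rcases hz with rfl | hz
    · exact ⟨b, by simp⟩
    · obtain ⟨z', hz'⟩ := ih hz hzv
      exact ⟨z', by simp [hz']⟩

lemma walk_split {A : SimpleGraph V} {e : Sym2 V} :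
    ∀ {u v : V} (p : A.Walk u v), p.edges.Nodup → e ∈ p.edges →
      ∃ c c', e = s(c, c') ∧ (A.deleteEdges {e}).Reachable u c ∧
        (A.deleteEdges {e}).Reachable c' v := by
  intro u v p
  induction p with
  | nil => simp
  | @cons a b c h q ih =>
    intro hnd he
    rw [Walk.edges_cons, List.nodup_cons] at hnd
    rw [Walk.edges_cons, List.mem_cons] at he
    rcases he with heq | he'
    · refine ⟨a, b, heq, Reachable.refl _, ?_⟩
      refine ⟨q.toDeleteEdges {e} fun e' he'h hmemh => hnd.1 ?_⟩
      rw [Set.mem_singleton_iff] at hmemh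
      rw [← heq, ← hmemh]
      exact he'h
    · obtain ⟨c₀, c₀', hcc, h1, h2⟩ := ih hnd.2 he'
      have hub : (A.deleteEdges {e}).Adj a b := by
        rw [deleteEdges_adj]
        refine ⟨h, ?_⟩
        rw [Set.mem_singleton_iff]
        rintro rfl
        exact hnd.1 he'
      exact ⟨c₀, c₀', hcc, hub.reachable.trans h1, h2⟩

lemma reach_endpoints {A : SimpleGraph V} (hA : A.Connected) {e : Sym2 V} {c c' : V}
    (hcc : e = s(c, c')) (w : V) :
    (A.deleteEdges {e}).Reachable w c ∨ (A.deleteEdges {e}).Reachable w c' := by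
  classical
  obtain ⟨p0⟩ := hA.preconnected w c
  have hp : p0.bypass.IsPath := p0.bypass_isPath
  by_cases hmem : e ∈ p0.bypass.edges
  · obtain ⟨d, d', hdd, h1, h2⟩ := walk_split p0.bypass hp.edges_nodup hmem
    rcases Sym2.eq_iff.1 (hcc.symm.trans hdd) with ⟨rfl, rfl⟩ | ⟨rfl, rfl⟩
    · exact Or.inl h1
    · exact Or.inr h1
  · refine Or.inl ⟨p0.bypass.toDeleteEdges {e} fun e' he'h hmemh => ?_⟩
    rw [Set.mem_singleton_iff] at hmemh
    subst hmemh
    exact hmem he'h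

lemma cross {B T2 : SimpleGraph V} {u : V} :
    ∀ {x v : V} (q : B.Walk x v), T2.Reachable u x → ¬ T2.Reachable u v →
      ∃ a b, B.Adj a b ∧ a ∈ q.support ∧ b ∈ q.support ∧
        T2.Reachable u a ∧ ¬ T2.Reachable u b := by
  intro x v q
  induction q with
  | nil => intro h1 h2; exact absurd h1 h2
  | @cons a b c ha p ih =>
    intro h1 h2
    by_cases hb : T2.Reachable u b
    · obtain ⟨a', b', h3, h4, h5, h6, h7⟩ := ih hb h2
      exact ⟨a', b', h3, by simp [h4], by simp [h5], h6, h7⟩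
    · exact ⟨a, b, ha, by simp, by simp, h1, hb⟩

end Stmt6Aux

/-- For every connected labeled graph `G(l)` there is a spanning tree `T`
of `G` such that the function `d_l` built from the restriction of `l` to `T` (using
unique paths in `T`) equals `ρ_l` on `V(G) × V(G)`. -/
theorem stmt6_exists_spanning_tree_with_same_rho
    {V : Type*} [Fintype V] (G : SimpleGraph V) (hG : G.Connected)
    (l : V → NNReal) (ρ : V → V → NNReal)
    (hρ0 : ∀ u, ρ u u = 0)
    (hρ : ∀ u v, u ≠ v → IsLeast {x : NNReal |
      ∃ p : G.Walk u v, p.IsPath ∧ x = (p.support.map l).foldr max 0} (ρ u v)) :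
    ∃ T : SimpleGraph V, T ≤ G ∧ T.IsTree ∧
      ∀ u v, u ≠ v → ∀ p : T.Walk u v, p.IsPath →
        ρ u v = (p.support.map l).foldr max 0 := by
  classical
  haveI hne : Nonempty V := hG.nonempty
  set W : Sym2 V → NNReal := fun e =>
    1 + Sym2.lift ⟨fun a b => max (l a) (l b), fun a b => max_comm _ _⟩ e with hWdef
  have hWs : ∀ a b : V, W s(a, b) = 1 + max (l a) (l b) := fun a b => rfl
  have hWpos : ∀ e : Sym2 V, (0 : NNReal) < W e := by
    intro e
    induction e using Sym2.ind with
    | _ a b => rw [hWs]; exact lt_of_lt_of_le zero_lt_one le_self_add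
  obtain ⟨F, hF, hFmin⟩ := Set.exists_min_image
    {F : Finset (Sym2 V) | F ⊆ G.edgeFinset ∧ (fromEdgeSet (F : Set (Sym2 V))).Connected}
    (fun F => ∑ e ∈ F, W e) (Set.toFinite _)
    ⟨G.edgeFinset, Finset.Subset.refl _, by rw [coe_edgeFinset, fromEdgeSet_edgeSet]; exact hG⟩
  obtain ⟨hFsub, hTconn⟩ := hF
  set T := fromEdgeSet (F : Set (Sym2 V)) with hTdef
  have hmin : ∀ F' : Finset (Sym2 V), F' ⊆ G.edgeFinset →
      (fromEdgeSet (F' : Set (Sym2 V))).Connected → ∑ e ∈ F, W e ≤ ∑ e ∈ F', W e :=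
    fun F' h1 h2 => hFmin F' ⟨h1, h2⟩
  have hTG : T ≤ G := by
    calc T ≤ fromEdgeSet G.edgeSet :=
          fromEdgeSet_mono (by rw [← coe_edgeFinset]; exact Finset.coe_subset.2 hFsub)
    _ = G := fromEdgeSet_edgeSet G
  have hadjF : ∀ a b : V, T.Adj a b ↔ s(a, b) ∈ F := by
    intro a b
    rw [hTdef, fromEdgeSet_adj]
    constructor
    · exact fun h => h.1
    · intro h
      exact ⟨h, ((G.mem_edgeSet).1 ((mem_edgeFinset).1 (hFsub h))).ne⟩
  have hdel : ∀ e ∈ F,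
      T.deleteEdges {e} = fromEdgeSet ((F.erase e : Finset (Sym2 V)) : Set (Sym2 V)) := by
    intro e he
    ext a b
    simp only [deleteEdges_adj, hTdef, fromEdgeSet_adj, Set.mem_singleton_iff,
      Finset.mem_coe, Finset.mem_erase]
    tauto
  have hnc : ∀ e ∈ F,
      ¬ (fromEdgeSet ((F.erase e : Finset (Sym2 V)) : Set (Sym2 V))).Connected := by
    intro e he hc
    have h1 := hmin (F.erase e) ((F.erase_subset e).trans hFsub) hc
    rw [← Finset.sum_erase_add F W he] at h1
    have h2 : W e ≤ 0 :=
      (add_le_add_iff_left (∑ e' ∈ F.erase e, W e')).1 (by rwa [add_zero])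
    exact absurd h2 (not_le.2 (hWpos e))
  have hacyclic : T.IsAcyclic := by
    rw [isAcyclic_iff_forall_adj_isBridge]
    intro x y hxy
    rw [isBridge_iff]
    refine fun hreach => ?_
    have he : s(x, y) ∈ F := (hadjF x y).1 hxy
    have hT2 := hdel _ he
    have hreach' : (T.deleteEdges {s(x, y)}).Reachable x y := hreach
    apply hnc _ he
    rw [hT2] at hreach'
    have hall : ∀ w,
        (fromEdgeSet ((F.erase s(x, y) : Finset (Sym2 V)) : Set (Sym2 V))).Reachable w x := by
      intro w
      have hre := Stmt6Aux.reach_endpoints hTconn (rfl : s(x, y) = s(x, y)) w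
      rw [hT2] at hre
      rcases hre with h | h
      · exact h
      · exact h.trans hreach'.symm
    exact Connected.mk fun a b => (hall a).trans (hall b).symm
  refine ⟨T, hTG, ⟨hTconn, hacyclic⟩, ?_⟩
  intro u v huv p hp
  have hedges : ∀ e ∈ p.edges, e ∈ G.edgeSet := fun e heE =>
    edgeSet_mono hTG (p.edges_subset_edgeSet heE)
  have hle : ρ u v ≤ (p.support.map l).foldr max 0 :=
    (hρ u v huv).2 ⟨p.transfer G hedges, hp.transfer hedges, by rw [Walk.support_transfer]⟩
  refine le_antisymm hle (Stmt6Aux.foldr_max_le _ _ ?_)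
  intro x hx
  rw [List.mem_map] at hx
  obtain ⟨y, hy, rfl⟩ := hx
  by_contra hcon
  push_neg at hcon
  obtain ⟨q, hq, hqe⟩ := (hρ u v huv).1
  have hqlab : ∀ x ∈ q.support, l x ≤ ρ u v := fun x hxq =>
    le_of_le_of_eq (Stmt6Aux.le_foldr_max (List.mem_map_of_mem (f := l) hxq)) hqe.symm
  have hyv : y ≠ v := by
    rintro rfl
    exact absurd (hqlab y q.end_mem_support) (not_le.2 hcon)
  obtain ⟨z', hze⟩ := Stmt6Aux.exists_succ_edge p hy hyv
  have heT : s(y, z') ∈ T.edgeSet := p.edges_subset_edgeSet hze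
  have heF : s(y, z') ∈ F := by
    rw [hTdef, edgeSet_fromEdgeSet] at heT
    exact Finset.mem_coe.1 heT.1
  have hT2 := hdel _ heF
  obtain ⟨c, c', hcc, h1, h2⟩ := Stmt6Aux.walk_split p hp.edges_nodup hze
  rw [hT2] at h1 h2
  have hbr : ¬ (T.deleteEdges {s(y, z')}).Reachable y z' := by
    have hadj : T.Adj y z' := (T.mem_edgeSet).1 heT
    exact isBridge_iff.1 ((isAcyclic_iff_forall_adj_isBridge.1 hacyclic) hadj)
  rw [hT2] at hbr
  have hsep : ¬ (fromEdgeSet ((F.erase s(y, z') : Finset (Sym2 V)) : Set (Sym2 V))).Reachable u v := by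
    intro hr
    have hcc'r := h1.symm.trans (hr.trans h2.symm)
    rcases Sym2.eq_iff.1 hcc with ⟨rfl, rfl⟩ | ⟨rfl, rfl⟩
    · exact hbr hcc'r
    · exact hbr hcc'r.symm
  obtain ⟨a, b, hab, haq, hbq, hua, hub⟩ :=
    Stmt6Aux.cross (B := G)
      (T2 := fromEdgeSet ((F.erase s(y, z') : Finset (Sym2 V)) : Set (Sym2 V)))
      q (Reachable.refl u) hsep
  have hla : l a ≤ ρ u v := hqlab a haq
  have hlb : l b ≤ ρ u v := hqlab b hbq
  have hfnotin : s(a, b) ∉ F.erase s(y, z') := by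
    intro hmem
    apply hub
    refine hua.trans (Adj.reachable ?_)
    rw [fromEdgeSet_adj]
    exact ⟨Finset.mem_coe.2 hmem, hab.ne⟩
  have hbcc := Stmt6Aux.reach_endpoints hTconn hcc b
  rw [hT2] at hbcc
  have hbc' :
      (fromEdgeSet ((F.erase s(y, z') : Finset (Sym2 V)) : Set (Sym2 V))).Reachable b c' := by
    rcases hbcc with h | h
    · exact absurd (h1.trans h.symm) hub
    · exact h
  have hF'sub : insert s(a, b) (F.erase s(y, z')) ⊆ G.edgeFinset := by
    refine Finset.insert_subset ?_ ((F.erase_subset _).trans hFsub)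
    rw [mem_edgeFinset, mem_edgeSet]
    exact hab
  have hmono : fromEdgeSet ((F.erase s(y, z') : Finset (Sym2 V)) : Set (Sym2 V)) ≤
      fromEdgeSet ((insert s(a, b) (F.erase s(y, z')) : Finset (Sym2 V)) : Set (Sym2 V)) :=
    fromEdgeSet_mono (by intro t ht; simp only [Finset.coe_insert, Set.mem_insert_iff,
      Finset.mem_coe] at ht ⊢; tauto)
  have hT'conn :
      (fromEdgeSet ((insert s(a, b) (F.erase s(y, z')) : Finset (Sym2 V)) : Set (Sym2 V))).Connected := by
    have habT' : (fromEdgeSet ((insert s(a, b) (F.erase s(y, z')) : Finset (Sym2 V)) :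
        Set (Sym2 V))).Adj a b := by
      rw [fromEdgeSet_adj]
      exact ⟨by simp, hab.ne⟩
    have hcc'T' : (fromEdgeSet ((insert s(a, b) (F.erase s(y, z')) : Finset (Sym2 V)) :
        Set (Sym2 V))).Reachable c c' :=
      ((h1.symm.trans hua).mono hmono).trans (habT'.reachable.trans (hbc'.mono hmono))
    have hallw : ∀ w, (fromEdgeSet ((insert s(a, b) (F.erase s(y, z')) : Finset (Sym2 V)) :
        Set (Sym2 V))).Reachable w c := by
      intro w
      have hre := Stmt6Aux.reach_endpoints hTconn hcc w
      rw [hT2] at hre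
      rcases hre with h | h
      · exact h.mono hmono
      · exact (h.mono hmono).trans hcc'T'.symm
    exact Connected.mk fun s t => (hallw s).trans (hallw t).symm
  have hsum := hmin _ hF'sub hT'conn
  rw [Finset.sum_insert hfnotin] at hsum
  have hlt : W s(a, b) < W s(y, z') := by
    rw [hWs, hWs]
    exact add_lt_add_right
      (lt_of_le_of_lt (max_le hla hlb) (lt_of_lt_of_le hcon (le_max_left _ _))) 1
  have hcontra : ∑ e' ∈ F, W e' < ∑ e' ∈ F, W e' := by
    calc ∑ e' ∈ F, W e' ≤ W s(a, b) + ∑ e' ∈ F.erase s(y, z'), W e' := hsum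
    _ < W s(y, z') + ∑ e' ∈ F.erase s(y, z'), W e' := add_lt_add_left hlt _
    _ = ∑ e' ∈ F, W e' := by rw [add_comm, Finset.sum_erase_add F W heF]
  exact lt_irrefl _ hcontra
end
end

section
/- Let G be a connected finite graph with a labeling l : V(G) → ℝ≥0. Then the following are equivalent: (1) ρ_l is an ultrametric on V(G); (2) ρ_l is a metric on V(G); (3) max{l(u), l(v)} > 0 holds for every edge {u,v} ∈ E(G). -/
open SimpleGraph

noncomputable section

variable {V : Type*}

private lemma le_foldr_max' {a : NNReal} {L : List NNReal} (h : a ∈ L) :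
    a ≤ L.foldr max 0 := by
  induction L with
  | nil => simp at h
  | cons b t ih =>
    rcases List.mem_cons.mp h with rfl | h
    · exact le_max_left _ _
    · exact le_trans (ih h) (le_max_right _ _)

private lemma foldr_max_le' {b : NNReal} {L : List NNReal} (h : ∀ a ∈ L, a ≤ b) :
    L.foldr max 0 ≤ b := by
  induction L with
  | nil => simp
  | cons c t ih =>
    simp only [List.foldr_cons]
    exact max_le (h c (by simp)) (ih fun a ha => h a (List.mem_cons_of_mem _ ha))

private lemma foldr_max_rev' (L : List NNReal) :
    L.reverse.foldr max 0 = L.foldr max 0 :=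
  le_antisymm (foldr_max_le' fun a ha => le_foldr_max' (List.mem_reverse.mp ha))
    (foldr_max_le' fun a ha => le_foldr_max' (List.mem_reverse.mpr ha))

/-- For a connected labeled graph `G(l)` and `ρ_l` defined via the minimax
over paths, the following are equivalent: (1) `ρ_l` is an ultrametric; (2) `ρ_l` is a
metric; (3) `max {l u, l v} > 0` for every edge `{u, v}`. -/
theorem stmt7_rho_ultrametric_iff_metric_iff_pos_on_edges
    {V : Type*} [Fintype V] (G : SimpleGraph V) (hG : G.Connected)
    (l : V → NNReal) (ρ : V → V → NNReal)
    (hρ0 : ∀ u, ρ u u = 0)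
    (hρ : ∀ u v, u ≠ v → IsLeast {x : NNReal |
      ∃ p : G.Walk u v, p.IsPath ∧ x = (p.support.map l).foldr max 0} (ρ u v)) :
    (IsUltrametricOn ρ Set.univ ↔ IsMetricOn ρ Set.univ) ∧
    (IsMetricOn ρ Set.univ ↔ ∀ u v, G.Adj u v → 0 < max (l u) (l v)) := by
  classical
  -- metric implies edge positivity
  have m3 : IsMetricOn ρ Set.univ → ∀ u v, G.Adj u v → 0 < max (l u) (l v) := by
    intro hm u v huv
    by_contra hc
    push_neg at hc
    have hlu : l u = 0 := le_antisymm (le_trans (le_max_left _ _) hc) zero_le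
    have hlv : l v = 0 := le_antisymm (le_trans (le_max_right _ _) hc) zero_le
    have hne : u ≠ v := G.ne_of_adj huv
    have hpath : (Walk.cons huv Walk.nil : G.Walk u v).IsPath := by
      simp [Walk.isPath_def, hne]
    have hmem : (0 : NNReal) ∈ {x : NNReal |
        ∃ p : G.Walk u v, p.IsPath ∧ x = (p.support.map l).foldr max 0} := by
      refine ⟨Walk.cons huv Walk.nil, hpath, ?_⟩
      simp [hlu, hlv]
    have h0 : ρ u v = 0 := le_antisymm ((hρ u v hne).2 hmem) zero_le
    exact hne (((hm.1 u trivial v trivial)).mp h0)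
  -- edge positivity implies ultrametric
  have key : (∀ u v, G.Adj u v → 0 < max (l u) (l v)) → IsUltrametricOn ρ Set.univ := by
    intro h3
    have hpos : ∀ u v, u ≠ v → ρ u v ≠ 0 := by
      intro u v hne
      obtain ⟨p, hp, heq⟩ := (hρ u v hne).1
      cases p with
      | nil => exact absurd rfl hne
      | @cons _ w _ hadj q =>
        have hw : l w ∈ (Walk.cons hadj q).support.map l := by
          simp [Walk.support_cons]
          exact Or.inr ⟨w, q.start_mem_support, rfl⟩
        have hu : l u ∈ (Walk.cons hadj q).support.map l := by
          simp [Walk.support_cons]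
        have hle : max (l u) (l w) ≤ ρ u v := by
          rw [heq]
          exact max_le (le_foldr_max' hu) (le_foldr_max' hw)
        have := lt_of_lt_of_le (h3 u w hadj) hle
        exact (pos_iff_ne_zero.mp this)
    have hsymm : ∀ u v, ρ u v = ρ v u := by
      have half : ∀ u v, u ≠ v → ρ u v ≤ ρ v u := by
        intro u v hne
        obtain ⟨q, hq, hqe⟩ := (hρ v u hne.symm).1
        have hmem : ρ v u ∈ {x : NNReal |
            ∃ p : G.Walk u v, p.IsPath ∧ x = (p.support.map l).foldr max 0} := by
          refine ⟨q.reverse, hq.reverse, ?_⟩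
          rw [Walk.support_reverse, List.map_reverse, foldr_max_rev', hqe]
        exact (hρ u v hne).2 hmem
      intro u v
      by_cases h : u = v
      · subst h; rfl
      · exact le_antisymm (half u v h) (half v u (Ne.symm h))
    have hstrong : ∀ x y z : V, ρ x y ≤ max (ρ x z) (ρ z y) := by
      intro x y z
      by_cases hxy : x = y
      · subst hxy; rw [hρ0]; exact zero_le
      by_cases hxz : x = z
      · subst hxz; exact le_max_right _ _
      by_cases hzy : z = y
      · subst hzy; exact le_max_left _ _
      obtain ⟨p, hp, hpe⟩ := (hρ x z hxz).1
      obtain ⟨q, hq, hqe⟩ := (hρ z y hzy).1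
      set w := p.append q with hw
      have hmem : (w.bypass.support.map l).foldr max 0 ∈ {x' : NNReal |
          ∃ r : G.Walk x y, r.IsPath ∧ x' = (r.support.map l).foldr max 0} :=
        ⟨w.bypass, Walk.bypass_isPath w, rfl⟩
      refine le_trans ((hρ x y hxy).2 hmem) ?_
      apply foldr_max_le'
      intro a ha
      obtain ⟨v', hv', rfl⟩ := List.mem_map.mp ha
      have hv'' : v' ∈ w.support := Walk.support_bypass_subset w hv'
      rw [hw, Walk.support_append] at hv''
      rcases List.mem_append.mp hv'' with h | h
      · exact le_trans (by rw [hpe]; exact le_foldr_max' (List.mem_map_of_mem (f := l) h))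
          (le_max_left _ _)
      · refine le_trans ?_ (le_max_right _ _)
        rw [hqe]
        exact le_foldr_max' (List.mem_map_of_mem (f := l) (List.mem_of_mem_tail h))
    have hmetric : IsMetricOn ρ Set.univ := by
      refine ⟨fun x _ y _ => ?_, fun x _ y _ => hsymm x y, fun x _ y _ z _ => ?_⟩
      · constructor
        · intro h0
          by_contra hne
          exact hpos x y hne h0
        · intro h; subst h; exact hρ0 x
      · exact le_trans (hstrong x y z) (max_le le_self_add le_add_self)
    exact ⟨hmetric, fun x _ y _ z _ => hstrong x y z⟩
  exact ⟨⟨fun h => h.1, fun h => key (m3 h)⟩, ⟨m3, fun h => (key h).1⟩⟩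
end
end

section
/- Let T(r) be a nonempty rooted tree. For every equidistant weight w : E(T) → ℝ≥0 there is a unique monotone labeling l : V(T) → ℝ≥0 such that w({u,v}) = (1/2)(l(u) − l(v)) holds whenever v is a direct successor of u. -/
open SimpleGraph

noncomputable section

variable {V : Type*}

namespace Stmt9Aux

open SimpleGraph Walk

variable {V : Type*} {G : SimpleGraph V}


open SimpleGraph Walk

variable {V : Type*} {G : SimpleGraph V}

noncomputable def pathTo (hG : G.IsTree) (r v : V) : G.Walk r v :=
  (hG.existsUnique_path r v).choose

lemma pathTo_isPath (hG : G.IsTree) (r v : V) : (pathTo hG r v).IsPath :=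
  (hG.existsUnique_path r v).choose_spec.1

lemma eq_pathTo (hG : G.IsTree) {r v : V} {p : G.Walk r v} (hp : p.IsPath) :
    p = pathTo hG r v :=
  (hG.existsUnique_path r v).choose_spec.2 p hp

lemma directSucc_concat (hG : G.IsTree) {r u v : V}
    (ha : G.Adj u v) (q : G.Walk v r) (hq : q.IsPath) (hu : u ∈ q.support) :
    v ∉ (pathTo hG r u).support ∧
      pathTo hG r v = (pathTo hG r u).concat ha := by
  classical
  have hq2 : (q.dropUntil u hu).IsPath := hq.dropUntil hu
  have hq1 : q.takeUntil u hu = Walk.cons ha.symm Walk.nil :=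
    (hG.existsUnique_path v u).unique (hq.takeUntil hu)
      (by simp [Walk.cons_isPath_iff, ha.ne'])
  have hqeq : q = Walk.cons ha.symm (q.dropUntil u hu) := by
    conv_lhs => rw [← q.take_spec hu]
    rw [hq1]
    simp
  have hv : v ∉ (q.dropUntil u hu).support := by
    have h2 := hq
    rw [hqeq, Walk.cons_isPath_iff] at h2
    exact h2.2
  have hpath : pathTo hG r u = (q.dropUntil u hu).reverse := (eq_pathTo hG hq2.reverse).symm
  have hv' : v ∉ (pathTo hG r u).support := by
    rw [hpath, Walk.support_reverse]; simpa using hv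
  refine ⟨hv', ?_⟩
  refine (eq_pathTo hG ?_).symm
  rw [← Walk.isPath_reverse_iff, Walk.reverse_concat, Walk.cons_isPath_iff]
  exact ⟨(pathTo_isPath hG r u).reverse, by rwa [Walk.support_reverse, List.mem_reverse]⟩


lemma exists_directSucc (hG : G.IsTree) {r v : V} (h : outDeg G r v ≠ 0) :
    ∃ v', DirectSucc G r v v' := by
  classical
  by_cases hvr : v = r
  · subst hvr
    rw [outDeg, if_pos rfl, vdeg] at h
    have : Nonempty (G.neighborSet v) := (Nat.card_ne_zero.mp h).1
    obtain ⟨u, hu⟩ := this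
    exact ⟨u, hu, pathTo hG u v, pathTo_isPath hG u v, Walk.end_mem_support _⟩
  · rw [outDeg, if_neg hvr, vdeg] at h
    have h2 : 1 < (G.neighborSet v).ncard := by
      rw [← Nat.card_coe_set_eq]; omega
    -- the path from v to r starts with some neighbor u0
    have hq : ((pathTo hG r v).reverse).IsPath := (pathTo_isPath hG r v).reverse
    obtain ⟨u0, ha0, q0, hq0eq⟩ := Walk.exists_eq_cons_of_ne hvr (pathTo hG r v).reverse
    rw [hq0eq, Walk.cons_isPath_iff] at hq
    obtain ⟨hq0, hvq0⟩ := hq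
    obtain ⟨u, hu, hune⟩ := Set.exists_ne_of_one_lt_ncard h2 u0
    have ha : G.Adj v u := hu
    -- u ∉ q0.support
    have huq0 : u ∉ q0.support := by
      intro hmem
      have h1 : (Walk.cons ha Walk.nil : G.Walk v u).IsPath := by
        simp [Walk.cons_isPath_iff, ha.ne, ha.ne']
      have h2p : (Walk.cons ha0 (q0.takeUntil u hmem) : G.Walk v u).IsPath := by
        rw [Walk.cons_isPath_iff]
        exact ⟨hq0.takeUntil hmem, fun hc => hvq0 (q0.support_takeUntil_subset hmem hc)⟩
      have := (hG.existsUnique_path v u).unique h2p h1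
      have hsup := congrArg Walk.support this
      rw [Walk.support_cons, Walk.support_cons, Walk.support_nil] at hsup
      have htu : (q0.takeUntil u hmem).support = [u] := by
        simpa using hsup
      have hstart := (q0.takeUntil u hmem).start_mem_support
      rw [htu] at hstart
      simp at hstart
      exact hune hstart.symm
    refine ⟨u, ha, Walk.cons ha.symm (Walk.cons ha0 q0), ?_, ?_⟩
    · rw [Walk.cons_isPath_iff, Walk.cons_isPath_iff]
      refine ⟨⟨hq0, hvq0⟩, ?_⟩
      rw [Walk.support_cons]
      simp only [List.mem_cons]
      rintro (rfl | hc)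
      · exact ha.ne rfl
      · exact huq0 hc
    · simp


noncomputable def D (hG : G.IsTree) (w : Sym2 V → NNReal) (r v : V) : NNReal :=
  ((pathTo hG r v).edges.map w).sum

lemma D_step (hG : G.IsTree) (w : Sym2 V → NNReal) {r u v : V}
    (ds : DirectSucc G r u v) :
    D hG w r v = D hG w r u + w s(u, v) ∧
      (pathTo hG r v).length = (pathTo hG r u).length + 1 := by
  obtain ⟨ha, q, hq, hu⟩ := ds
  obtain ⟨-, heq⟩ := directSucc_concat hG ha q hq hu
  constructor
  · simp [D, heq, Walk.edges_concat]
  · rw [heq, Walk.length_concat]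

lemma D_lt [Fintype V] (hG : G.IsTree) {w : Sym2 V → NNReal} {r : V}
    (hpos : ∀ e ∈ G.edgeSet, 0 < w e) {K : NNReal}
    (hK : ∀ u, outDeg G r u = 0 → ∀ p : G.Walk r u, p.IsPath → (p.edges.map w).sum = K) :
    ∀ v, D hG w r v ≤ K ∧ (outDeg G r v ≠ 0 → D hG w r v < K) := by
  have main : ∀ n v, Fintype.card V - (pathTo hG r v).length ≤ n →
      D hG w r v ≤ K ∧ (outDeg G r v ≠ 0 → D hG w r v < K) := by
    intro n
    induction n with
    | zero =>
      intro v hv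
      have := (pathTo_isPath hG r v).length_lt
      omega
    | succ n ih =>
      intro v hv
      by_cases h0 : outDeg G r v = 0
      · have : D hG w r v = K := hK v h0 _ (pathTo_isPath hG r v)
        exact ⟨le_of_eq this, fun h' => absurd h0 h'⟩
      · obtain ⟨v', ds⟩ := exists_directSucc hG h0
        obtain ⟨hD, hlen⟩ := D_step hG w ds
        have hlt := (pathTo_isPath hG r v').length_lt
        have hv' : Fintype.card V - (pathTo hG r v').length ≤ n := by omega
        have hK' : D hG w r v' ≤ K := (ih v' hv').1
        have hwpos : 0 < w s(v, v') := hpos _ (G.mem_edgeSet.mpr ds.1)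
        have : D hG w r v < D hG w r v' := by
          rw [hD]
          exact lt_add_of_pos_right _ hwpos
        exact ⟨le_of_lt (lt_of_lt_of_le this hK'), fun _ => lt_of_lt_of_le this hK'⟩
  exact fun v => main (Fintype.card V) v (by omega)

end Stmt9Aux

/-- For every equidistant weight `w` of a nonempty rooted tree `T(r)` there
is a unique monotone labeling `l` such that `w {u, v} = (l u - l v) / 2` whenever `v` is
a direct successor of `u`. -/
theorem stmt9_unique_monotone_labeling_from_equidistant_weight
    {V : Type*} [Fintype V] (G : SimpleGraph V) (hG : G.IsTree)
    (hE : G.edgeSet.Nonempty) (r : V) (w : Sym2 V → NNReal)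
    (hw : EquidistantWeight G r w) :
    ∃! l : V → NNReal, MonotoneLabeling G r l ∧
      ∀ u v, DirectSucc G r u v → w s(u, v) = (l u - l v) / 2 := by
  classical
  obtain ⟨hpos, K, hK⟩ := hw
  set d : V → NNReal := Stmt9Aux.D hG w r with hd
  have hDle := Stmt9Aux.D_lt hG hpos hK
  rw [← hd] at hDle
  have hleaf : ∀ v, outDeg G r v = 0 → d v = K :=
    fun v h0 => hK v h0 _ (Stmt9Aux.pathTo_isPath hG r v)
  set l : V → NNReal := fun v => 2 * (K - d v) with hl
  -- key additive relation
  have hstep : ∀ u v, DirectSucc G r u v → l u = l v + 2 * w s(u, v) := by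
    intro u v ds
    obtain ⟨hD, -⟩ := Stmt9Aux.D_step hG w ds
    rw [← hd] at hD
    have hvK : d v ≤ K := (hDle v).1
    have hcle : w s(u, v) ≤ K - d u := le_tsub_of_add_le_left (by rw [← hD]; exact hvK)
    have h1 : K - d u = (K - d v) + w s(u, v) := by
      rw [hD, ← tsub_tsub, tsub_add_cancel_of_le hcle]
    simp only [hl, h1]
    ring
  have hwpos : ∀ u v, DirectSucc G r u v → 0 < w s(u, v) :=
    fun u v ds => hpos _ (G.mem_edgeSet.mpr ds.1)
  have hmono : MonotoneLabeling G r l := by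
    constructor
    · intro v
      constructor
      · intro h0
        by_contra hne
        have := (hDle v).2 hne
        have : l v ≠ 0 := by
          simp only [hl]
          have h2 : 0 < K - d v := tsub_pos_of_lt this
          positivity
        exact this h0
      · intro h0
        simp only [hl, hleaf v h0, tsub_self, mul_zero]
    · intro u v ds
      rw [hstep u v ds]
      have := hwpos u v ds
      exact lt_add_of_pos_right _ (by positivity)
  have hprop : ∀ u v, DirectSucc G r u v → w s(u, v) = (l u - l v) / 2 := by
    intro u v ds
    rw [hstep u v ds, add_tsub_cancel_left]
    rw [mul_comm, mul_div_assoc]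
    norm_num
  refine ⟨l, ⟨hmono, hprop⟩, ?_⟩
  rintro l' ⟨⟨m1, m2⟩, hp⟩
  have key : ∀ n v, Fintype.card V - (Stmt9Aux.pathTo hG r v).length ≤ n → l' v = l v := by
    intro n
    induction n with
    | zero =>
      intro v hv
      have := (Stmt9Aux.pathTo_isPath hG r v).length_lt
      omega
    | succ n ih =>
      intro v hv
      by_cases h0 : outDeg G r v = 0
      · rw [(m1 v).mpr h0, ((hmono.1) v).mpr h0]
      · obtain ⟨v', ds⟩ := Stmt9Aux.exists_directSucc hG h0
        obtain ⟨-, hlen⟩ := Stmt9Aux.D_step hG w ds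
        have hlt := (Stmt9Aux.pathTo_isPath hG r v').length_lt
        have hv' : Fintype.card V - (Stmt9Aux.pathTo hG r v').length ≤ n := by omega
        have hrec : l' v = l' v' + 2 * w s(v, v') := by
          have he := hp v v' ds
          have hlt' := m2 v v' ds
          have h2 : l' v - l' v' = w s(v, v') * 2 :=
            (div_eq_iff (two_ne_zero)).mp he.symm
          calc l' v = (l' v - l' v') + l' v' := (tsub_add_cancel_of_le hlt'.le).symm
            _ = l' v' + 2 * w s(v, v') := by rw [h2]; ring
        rw [hrec, ih v' hv', hstep v v' ds]
  funext v
  exact key (Fintype.card V) v (by omega)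
end
end

section
/- Let T(r,w) be an equidistant weighted rooted tree and let l : V(T) → ℝ≥0 be the monotone labeling satisfying w({u,v}) = (1/2)(l(u) − l(v)) whenever v is a direct successor of u. Let u1 and u2 be two distinct vertices of V_0^+(T) and let P be the path joining u1 and u2 in T. Then d_w(u1, u2) = max_{v ∈ V(P)} l(v). -/
open SimpleGraph

noncomputable section

variable {V : Type*}

namespace Stmt10

open SimpleGraph Walk

variable {G : SimpleGraph V} {r : V}

def Asc (G : SimpleGraph V) (r : V) {a b : V} (p : G.Walk a b) : Prop :=
  List.Chain' (fun x y => DirectSucc G r y x) p.support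

lemma asc_of_path_to_root : ∀ {u : V} (q : G.Walk u r), q.IsPath → Asc G r q := by
  intro u q
  induction q with
  | nil => intro _; simp [Asc, List.Chain']
  | cons h q ih =>
    intro hq
    rename_i a b c
    unfold Asc
    rw [Walk.support_cons, List.Chain', List.isChain_cons]
    refine ⟨?_, ih hq.of_cons⟩
    intro y hy
    rw [Walk.support_eq_cons q] at hy
    simp only [List.head?_cons, Option.mem_def, Option.some.injEq] at hy
    subst hy
    exact ⟨h.symm, Walk.cons h q, hq, by simp [Walk.start_mem_support]⟩

lemma asc_sum {w : Sym2 V → NNReal} {l : V → NNReal}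
    (hl : ∀ u v, DirectSucc G r u v → l v < l u)
    (hrel : ∀ u v, DirectSucc G r u v → w s(u, v) = (l u - l v) / 2) :
    ∀ {a m : V} (t : G.Walk a m), Asc G r t →
      (t.edges.map w).sum = (l m - l a) / 2 ∧ l a ≤ l m ∧ ∀ v ∈ t.support, l v ≤ l m := by
  intro a m t
  induction t with
  | nil => intro _; refine ⟨by simp, le_refl _, by simp⟩
  | cons h t ih =>
    rename_i x y z
    intro ht
    unfold Asc at ht
    rw [Walk.support_cons, List.Chain', List.isChain_cons] at ht
    obtain ⟨hhead, hchain⟩ := ht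
    have hds : DirectSucc G r y x := by
      apply hhead
      rw [Walk.support_eq_cons t]; rfl
    obtain ⟨hs, hle, hall⟩ := ih hchain
    have hxy : l x < l y := hl _ _ hds
    have hw : w s(x, y) = (l y - l x) / 2 := by
      rw [Sym2.eq_swap]; exact hrel _ _ hds
    refine ⟨?_, hxy.le.trans hle, ?_⟩
    · rw [Walk.edges_cons, List.map_cons, List.sum_cons, hw, hs, ← add_div,
        add_comm, tsub_add_tsub_cancel hle hxy.le]
    · intro v hv
      rw [Walk.support_cons] at hv
      rcases List.mem_cons.mp hv with h' | h'
      · subst h'; exact hxy.le.trans hle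
      · exact hall v h'

lemma decomp_base [DecidableEq V] {u2 u1 : V} (q2 : G.Walk u2 r) (hq2 : q2.IsPath)
    (hq2a : Asc G r q2) (hmem : u1 ∈ q2.support) :
    ∃ t2 : G.Walk u2 u1, Asc G r t2 ∧ t2.reverse.IsPath ∧
      ∀ v ∈ t2.support, v ∈ q2.support := by
  refine ⟨q2.takeUntil u1 hmem, ?_, (hq2.takeUntil hmem).reverse,
    fun v hv => q2.support_takeUntil_subset hmem hv⟩
  unfold Asc at *
  rw [← Walk.take_spec q2 hmem, Walk.support_append, List.Chain', List.isChain_append] at hq2a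
  exact hq2a.1

lemma decomp_base' [DecidableEq V] {u2 u1 : V} (q2 : G.Walk u2 r) (hq2 : q2.IsPath)
    (hq2a : Asc G r q2) (hmem : u1 ∈ q2.support) (q1 : G.Walk u1 r) :
    ∃ (m : V) (t1 : G.Walk u1 m) (t2 : G.Walk u2 m),
        Asc G r t1 ∧ Asc G r t2 ∧ (t1.append t2.reverse).IsPath ∧
        (∀ v ∈ t1.support, v ∈ q1.support) ∧ (∀ v ∈ t2.support, v ∈ q2.support) := by
  obtain ⟨t2, ha2, hp2, hs2⟩ := decomp_base q2 hq2 hq2a hmem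
  exact ⟨u1, Walk.nil, t2, by simp [Asc, List.Chain'], ha2, by simpa using hp2,
    by simp [Walk.start_mem_support], hs2⟩

lemma decomp [DecidableEq V] {u2 : V} (q2 : G.Walk u2 r) (hq2 : q2.IsPath)
    (hq2a : Asc G r q2) :
    ∀ (n : ℕ) {u1 : V} (q1 : G.Walk u1 r), q1.length ≤ n → q1.IsPath →
      ∃ (m : V) (t1 : G.Walk u1 m) (t2 : G.Walk u2 m),
        Asc G r t1 ∧ Asc G r t2 ∧ (t1.append t2.reverse).IsPath ∧
        (∀ v ∈ t1.support, v ∈ q1.support) ∧ (∀ v ∈ t2.support, v ∈ q2.support) := by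
  intro n
  induction n with
  | zero =>
    intro u1 q1 hlen hq1
    have hu : u1 = r := by
      cases q1 with
      | nil => rfl
      | cons h q => simp [Walk.length_cons] at hlen
    subst hu
    exact decomp_base' q2 hq2 hq2a q2.end_mem_support q1
  | succ n ihn =>
    intro u1 q1 hlen hq1
    by_cases hmem : u1 ∈ q2.support
    · exact decomp_base' q2 hq2 hq2a hmem q1
    · cases q1 with
      | nil => exact absurd q2.end_mem_support hmem
      | cons h q =>
        rename_i y
        obtain ⟨m, t1, t2, ha1, ha2, hcp, hs1, hs2⟩ :=
          ihn q (by simpa [Walk.length_cons, Nat.succ_le_succ_iff] using hlen) hq1.of_cons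
        have hds : DirectSucc G r y u1 :=
          ⟨h.symm, Walk.cons h q, hq1, by simp [Walk.start_mem_support]⟩
        have hxnot : u1 ∉ (t1.append t2.reverse).support := by
          rw [Walk.support_append]
          intro hx
          rcases List.mem_append.mp hx with h' | h'
          · exact ((Walk.cons_isPath_iff h q).mp hq1).2 (hs1 u1 h')
          · have : u1 ∈ t2.support := by
              have h2 := List.mem_of_mem_tail h'
              rw [Walk.support_reverse] at h2
              exact List.mem_reverse.mp h2
            exact hmem (hs2 u1 this)
        refine ⟨m, Walk.cons h t1, t2, ?_, ha2, ?_, ?_, hs2⟩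
        · unfold Asc
          rw [Walk.support_cons, List.Chain', List.isChain_cons]
          refine ⟨?_, ha1⟩
          intro z hz
          rw [Walk.support_eq_cons t1] at hz
          simp only [List.head?_cons, Option.mem_def, Option.some.injEq] at hz
          subst hz
          exact hds
        · rw [Walk.cons_append]
          exact (Walk.cons_isPath_iff _ _).mpr ⟨hcp, hxnot⟩
        · intro v hv
          rw [Walk.support_cons] at hv ⊢
          rcases List.mem_cons.mp hv with h' | h'
          · simp [h']
          · exact List.mem_cons_of_mem _ (hs1 v h')

lemma foldr_max_le {L : List NNReal} {a : NNReal} (h : ∀ x ∈ L, x ≤ a) :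
    L.foldr max 0 ≤ a := by
  induction L with
  | nil => simp
  | cons x t ih =>
    simp only [List.foldr_cons]
    exact max_le (h x (by simp)) (ih fun y hy => h y (by simp [hy]))

lemma le_foldr_max {L : List NNReal} {x : NNReal} (h : x ∈ L) : x ≤ L.foldr max 0 := by
  induction L with
  | nil => simp at h
  | cons y t ih =>
    simp only [List.foldr_cons]
    rcases List.mem_cons.mp h with h | h
    · subst h; exact le_max_left _ _
    · exact le_trans (ih h) (le_max_right _ _)

end Stmt10

/-- In an equidistant tree `T(r, w)` with corresponding monotone labeling
`l`, for distinct `u₁, u₂ ∈ V₀⁺(T)` and the path `P` joining them,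
`d_w (u₁, u₂) = max_{v ∈ V(P)} l v`. -/
theorem stmt10_distance_eq_max_label_on_path
    {V : Type*} [Fintype V] (G : SimpleGraph V) (hG : G.IsTree) (r : V)
    (w : Sym2 V → NNReal) (hw : EquidistantWeight G r w)
    (l : V → NNReal) (hl : MonotoneLabeling G r l)
    (hrel : ∀ u v, DirectSucc G r u v → w s(u, v) = (l u - l v) / 2)
    (d : V → V → NNReal)
    (hd : ∀ u v, ∀ p : G.Walk u v, p.IsPath → d u v = (p.edges.map w).sum)
    (u1 u2 : V) (h1 : outDeg G r u1 = 0) (h2 : outDeg G r u2 = 0) (hne : u1 ≠ u2)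
    (P : G.Walk u1 u2) (hP : P.IsPath) :
    d u1 u2 = (P.support.map l).foldr max 0 := by
  
  classical
  obtain ⟨q1, hq1, -⟩ := hG.existsUnique_path u1 r
  obtain ⟨q2, hq2, -⟩ := hG.existsUnique_path u2 r
  obtain ⟨m, t1, t2, ha1, ha2, hcp, hs1, hs2⟩ :=
    Stmt10.decomp q2 hq2 (Stmt10.asc_of_path_to_root q2 hq2) q1.length q1 le_rfl hq1
  have hPc : P = t1.append t2.reverse := by
    obtain ⟨p0, hp0, huniq⟩ := hG.existsUnique_path u1 u2
    rw [huniq P hP, huniq _ hcp]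
  obtain ⟨hsum1, hle1, hall1⟩ := Stmt10.asc_sum hl.2 hrel t1 ha1
  obtain ⟨hsum2, hle2, hall2⟩ := Stmt10.asc_sum hl.2 hrel t2 ha2
  have hl1 : l u1 = 0 := (hl.1 u1).mpr h1
  have hl2 : l u2 = 0 := (hl.1 u2).mpr h2
  have hsum : d u1 u2 = l m := by
    rw [hd u1 u2 P hP, hPc, Walk.edges_append, List.map_append, List.sum_append,
      Walk.edges_reverse, List.map_reverse, List.sum_reverse, hsum1, hsum2, hl1, hl2,
      tsub_zero, add_halves]
  have hmax : (P.support.map l).foldr max 0 = l m := by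
    apply le_antisymm
    · apply Stmt10.foldr_max_le
      intro x hx
      obtain ⟨v, hv, rfl⟩ := List.mem_map.mp hx
      rw [hPc, Walk.support_append] at hv
      rcases List.mem_append.mp hv with h' | h'
      · exact hall1 v h'
      · have hmem2 : v ∈ t2.support := by
          have h2' := List.mem_of_mem_tail h'
          rw [Walk.support_reverse] at h2'
          exact List.mem_reverse.mp h2'
        exact hall2 v hmem2
    · apply Stmt10.le_foldr_max
      apply List.mem_map.mpr
      refine ⟨m, ?_, rfl⟩
      rw [hPc, Walk.support_append]
      exact List.mem_append_left _ t1.end_mem_support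
  rw [hsum, hmax]
end
end

section
/- Let T(r,w) be an equidistant weighted rooted tree such that δ⁺(v) ≥ 2 holds for some v ∈ V(T). Then there is an equidistant weighted rooted tree T^∇(r^∇, w^∇) such that V_1^+(T^∇) = ∅, V_0^+(T^∇) = V_0^+(T), V(T^∇) ⊆ V(T), |V(T^∇)| + |V_1^+(T)| = |V(T)|, and the restriction of d_w to V_0^+(T) × V_0^+(T) equals the restriction of d_{w^∇} to V_0^+(T^∇) × V_0^+(T^∇). -/
open SimpleGraph

noncomputable section

variable {V : Type*}

universe u

namespace Stmt13

lemma vdeg_eq_ncard {V : Type u} (G : SimpleGraph V) (v : V) :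
    vdeg G v = (G.neighborSet v).ncard := (Nat.card_coe_set_eq _)

lemma ncard_sub {V : Type u} {x : V} (S : Set {y : V // y ≠ x}) :
    Nat.card S = (Subtype.val '' S).ncard := by
  rw [Set.ncard_image_of_injective _ Subtype.val_injective, Nat.card_coe_set_eq]

section Suppress

variable {V : Type u} (G : SimpleGraph V) (x a b : V)

/-- The graph obtained by suppressing the degree-2 vertex `x` with neighbors `a, b`. -/
def G2 (hab : a ≠ b) : SimpleGraph {y : V // y ≠ x} where
  Adj u v := G.Adj u.val v.val ∨ (u.val = a ∧ v.val = b) ∨ (u.val = b ∧ v.val = a)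
  symm := by
    constructor
    rintro u v (h | ⟨h1, h2⟩ | ⟨h1, h2⟩)
    · exact Or.inl h.symm
    · exact Or.inr (Or.inr ⟨h2, h1⟩)
    · exact Or.inr (Or.inl ⟨h2, h1⟩)
  loopless := by
    constructor
    rintro u (h | ⟨h1, h2⟩ | ⟨h1, h2⟩)
    · exact G.loopless.irrefl _ h
    · exact hab (h1.symm.trans h2)
    · exact hab (h2.symm.trans h1)

variable {G x a b}

lemma adj_ux (hxa : G.Adj x a) (hxb : G.Adj x b) {u t : V}
    (hpair : (u = a ∧ t = b) ∨ (u = b ∧ t = a)) : G.Adj u x := by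
  rcases hpair with ⟨h1, _⟩ | ⟨h1, _⟩ <;> rw [h1]
  exacts [hxa.symm, hxb.symm]

lemma adj_xt (hxa : G.Adj x a) (hxb : G.Adj x b) {u t : V}
    (hpair : (u = a ∧ t = b) ∨ (u = b ∧ t = a)) : G.Adj x t := by
  rcases hpair with ⟨_, h2⟩ | ⟨_, h2⟩ <;> rw [h2]
  exacts [hxb, hxa]

variable (hab : a ≠ b) (hxa : G.Adj x a) (hxb : G.Adj x b)

open Classical in
/-- Mapping walks in the suppressed graph back to walks in `G`. -/
def phi (hab : a ≠ b) (hxa : G.Adj x a) (hxb : G.Adj x b) :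
    ∀ {u v : {y : V // y ≠ x}}, (G2 G x a b hab).Walk u v → G.Walk u.val v.val
  | _, _, .nil => .nil
  | u, v, @SimpleGraph.Walk.cons _ _ _ t _ h p =>
    if h' : G.Adj u.val t.val then .cons h' (phi hab hxa hxb p)
    else
      .cons (adj_ux hxa hxb (h.resolve_left h'))
        (.cons (adj_xt hxa hxb (h.resolve_left h')) (phi hab hxa hxb p))


open Classical in
/-- The weight on the suppressed graph. -/
def w2 (w : Sym2 V → NNReal) (x a b : V) : Sym2 {y : V // y ≠ x} → NNReal :=
  fun e => if Sym2.map Subtype.val e = s(a, b) then w s(x, a) + w s(x, b)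
           else w (Sym2.map Subtype.val e)

lemma phi_sum (hnadj : ¬ G.Adj a b) (w : Sym2 V → NNReal) :
    ∀ {u v : {y : V // y ≠ x}} (p : (G2 G x a b hab).Walk u v),
      ((phi hab hxa hxb p).edges.map w).sum = (p.edges.map (w2 w x a b)).sum := by
  intro u v p
  induction p with
  | nil => simp [phi]
  | @cons u₁ t v₁ h q ih =>
    simp only [phi]
    split_ifs with h'
    · rw [Walk.edges_cons, Walk.edges_cons, List.map_cons, List.map_cons,
        List.sum_cons, List.sum_cons, ih]
      congr 1
      rw [w2]
      simp only [Sym2.map_pair_eq]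
      rw [if_neg]
      intro hc
      rw [Sym2.map_pair_eq, Sym2.eq_iff] at hc
      rcases hc with ⟨h1, h2⟩ | ⟨h1, h2⟩
      · exact hnadj (h1 ▸ h2 ▸ h')
      · exact hnadj (h2 ▸ h1 ▸ h').symm
    · have hpair := h.resolve_left h'
      rw [Walk.edges_cons, Walk.edges_cons, Walk.edges_cons, List.map_cons,
        List.map_cons, List.map_cons, List.sum_cons, List.sum_cons, List.sum_cons, ih,
        ← add_assoc]
      congr 1
      rw [w2]
      simp only [Sym2.map_pair_eq]
      rw [if_pos]
      · rcases hpair with ⟨h1, h2⟩ | ⟨h1, h2⟩ <;> rw [h1, h2]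
        · rw [show s(a, x) = s(x, a) from Sym2.eq_swap]
        · rw [show s(b, x) = s(x, b) from Sym2.eq_swap, add_comm (w s(x, b))]
      · rw [Sym2.map_pair_eq, Sym2.eq_iff]
        rcases hpair with ⟨h1, h2⟩ | ⟨h1, h2⟩
        · exact Or.inl ⟨h1, h2⟩
        · exact Or.inr ⟨h1, h2⟩

lemma phi_strong (hnadj : ¬ G.Adj a b) :
    ∀ {u v : {y : V // y ≠ x}} (p : (G2 G x a b hab).Walk u v), p.IsPath →
      (phi hab hxa hxb p).IsPath ∧
      (∀ y ∈ (phi hab hxa hxb p).support, y = x ∨ ∃ z ∈ p.support, z.val = y) ∧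
      (x ∈ (phi hab hxa hxb p).support →
        s((⟨a, hxa.ne'⟩ : {y : V // y ≠ x}), ⟨b, hxb.ne'⟩) ∈ p.edges) := by
  intro u v p hp
  induction p with
  | nil =>
    rename_i u₀
    refine ⟨by simp [phi], ?_, ?_⟩
    · intro y hy
      simp only [phi, Walk.support_nil, List.mem_singleton] at hy
      exact Or.inr ⟨u₀, by simp, hy.symm⟩
    · intro hx
      simp only [phi, Walk.support_nil, List.mem_singleton] at hx
      exact absurd hx.symm u₀.prop
  | @cons u₁ t v₁ h q ih =>
    rw [Walk.cons_isPath_iff] at hp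
    obtain ⟨hq, hu₁⟩ := hp
    obtain ⟨ih1, ih2, ih3⟩ := ih hq
    have hedges : s(u₁, t) ∉ q.edges := fun hc => hu₁ (Walk.fst_mem_support_of_mem_edges q hc)
    have hvalnot : (u₁ : V) ∉ (phi hab hxa hxb q).support := by
      intro hm
      rcases ih2 _ hm with h1 | ⟨z, hz, hzv⟩
      · exact u₁.prop h1
      · exact hu₁ (by rwa [Subtype.val_injective hzv] at hz)
    simp only [phi]
    split_ifs with h'
    · refine ⟨ih1.cons hvalnot, ?_, ?_⟩
      · intro y hy
        rw [Walk.support_cons, List.mem_cons] at hy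
        rcases hy with rfl | hy
        · exact Or.inr ⟨u₁, by simp⟩
        · rcases ih2 _ hy with h1 | ⟨z, hz, hzv⟩
          · exact Or.inl h1
          · exact Or.inr ⟨z, by simp [hz], hzv⟩
      · intro hx
        rw [Walk.support_cons, List.mem_cons] at hx
        rcases hx with h1 | hx
        · exact absurd h1.symm u₁.prop
        · exact List.mem_cons_of_mem _ (ih3 hx)
    · have hpair := h.resolve_left h'
      have hcur : s(u₁, t) = s((⟨a, hxa.ne'⟩ : {y : V // y ≠ x}), ⟨b, hxb.ne'⟩) := by
        rw [Sym2.eq_iff]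
        rcases hpair with ⟨h1, h2⟩ | ⟨h1, h2⟩
        · exact Or.inl ⟨Subtype.ext h1, Subtype.ext h2⟩
        · exact Or.inr ⟨Subtype.ext h1, Subtype.ext h2⟩
      have hxnot : x ∉ (phi hab hxa hxb q).support := by
        intro hm
        exact hedges (hcur ▸ ih3 hm)
      refine ⟨?_, ?_, ?_⟩
      · refine Walk.IsPath.cons (Walk.IsPath.cons ih1 hxnot) ?_
        rw [Walk.support_cons, List.mem_cons]
        rintro (h1 | hm)
        · exact u₁.prop h1
        · exact hvalnot hm
      · intro y hy
        rw [Walk.support_cons, Walk.support_cons, List.mem_cons, List.mem_cons] at hy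
        rcases hy with rfl | rfl | hy
        · exact Or.inr ⟨u₁, by simp⟩
        · exact Or.inl rfl
        · rcases ih2 _ hy with h1 | ⟨z, hz, hzv⟩
          · exact Or.inl h1
          · exact Or.inr ⟨z, by simp [hz], hzv⟩
      · intro _
        rw [Walk.edges_cons, hcur]
        exact List.mem_cons_self

lemma phi_injective :
    ∀ {u v : {y : V // y ≠ x}} (p q : (G2 G x a b hab).Walk u v),
      phi hab hxa hxb p = phi hab hxa hxb q → p = q := by
  intro u v p
  induction p with
  | nil =>
    intro q hq
    cases q with
    | nil => rfl
    | cons h' q' =>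
      exfalso
      have := congrArg Walk.length hq
      simp only [phi] at this
      split_ifs at this <;> simp [Walk.length_cons] at this
  | @cons u₁ t v₁ h q ih =>
    intro q₂ heq
    cases q₂ with
    | nil =>
      exfalso
      have := congrArg Walk.length heq
      simp only [phi] at this
      split_ifs at this <;> simp [Walk.length_cons] at this
    | @cons _ t₂ _ h₂ q₂' =>
      simp only [phi] at heq
      split_ifs at heq with ha1 ha2 ha2
      · -- both G-edges
        injection heq with h1 h2 h3 h4
        have : t = t₂ := Subtype.ext h2
        subst this
        rw [heq_iff_eq] at h4
        rw [ih q₂' h4]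
      · -- p G-edge, q ab-edge
        injection heq with h1 h2 h3 h4
        exfalso; first | exact t.prop h2 | exact t.prop h2.symm
      · injection heq with h1 h2 h3 h4
        exfalso; first | exact t₂.prop h2 | exact t₂.prop h2.symm
      · -- both ab-edges
        injection heq with h1 h2 h3 h4
        injection h4 with h5 h6 h7 h8
        have : t = t₂ := Subtype.ext h6
        subst this
        rw [heq_iff_eq] at h8
        rw [ih q₂' h8]

include hxa hxb in
lemma reach_aux (hN : ∀ y, G.Adj x y → y = a ∨ y = b) :
    ∀ (n : ℕ) (u v : V) (hu : u ≠ x) (hv : v ≠ x) (p : G.Walk u v),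
      p.length ≤ n → (G2 G x a b hab).Reachable ⟨u, hu⟩ ⟨v, hv⟩ := by
  intro n
  induction n with
  | zero =>
    intro u v hu hv p hl
    cases p with
    | nil => exact Reachable.refl _
    | cons h q => simp [Walk.length_cons] at hl
  | succ n ih =>
    intro u v hu hv p hl
    cases p with
    | nil => exact Reachable.refl _
    | @cons _ t _ h q =>
      by_cases ht : t = x
      · cases q with
        | nil => exact absurd ht hv
        | @cons _ t₂ _ h₂ q₂ =>
          have ht₂ := hN t₂ (ht ▸ h₂)
          have hu' := hN u (ht ▸ h).symm
          have hlen : q₂.length ≤ n := by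
            simp only [Walk.length_cons] at hl; omega
          by_cases he : t₂ = u
          · subst he
            exact ih t₂ v hu hv q₂ hlen
          · have ht₂x : t₂ ≠ x := by
              rcases ht₂ with rfl | rfl
              exacts [hxa.ne', hxb.ne']
            have hadj : (G2 G x a b hab).Adj ⟨u, hu⟩ ⟨t₂, ht₂x⟩ := by
              rcases hu' with hu' | hu' <;> rcases ht₂ with h2 | h2
              · exact absurd (h2.trans hu'.symm) he
              · exact Or.inr (Or.inl ⟨hu', h2⟩)
              · exact Or.inr (Or.inr ⟨hu', h2⟩)
              · exact absurd (h2.trans hu'.symm) he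
            exact hadj.reachable.trans (ih t₂ v ht₂x hv q₂ hlen)
      · have hadj : (G2 G x a b hab).Adj ⟨u, hu⟩ ⟨t, ht⟩ := Or.inl h
        exact hadj.reachable.trans
          (ih t v ht hv q (by simp only [Walk.length_cons] at hl; omega))

include hxa hxb in
lemma G2_isTree (hG : G.IsTree) (hnadj : ¬ G.Adj a b)
    (hN : ∀ y, G.Adj x y → y = a ∨ y = b) : (G2 G x a b hab).IsTree := by
  classical
  rw [isTree_iff_existsUnique_path]
  refine ⟨⟨⟨a, hxa.ne'⟩⟩, fun u v => ?_⟩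
  have hreach : (G2 G x a b hab).Reachable u v := by
    obtain ⟨p⟩ := hG.isConnected.preconnected u.val v.val
    have := reach_aux hab hxa hxb hN p.length u.val v.val u.prop v.prop p le_rfl
    simpa using this
  obtain ⟨p⟩ := hreach
  refine ⟨p.toPath.1, p.toPath.2, ?_⟩
  intro q hq
  apply phi_injective hab hxa hxb
  exact (hG.existsUnique_path u.val v.val).unique
    ((phi_strong hab hxa hxb hnadj q hq).1)
    ((phi_strong hab hxa hxb hnadj p.toPath.1 p.toPath.2).1)

include hxa hxb in
lemma vdeg_G2 [Finite V] (hnadj : ¬ G.Adj a b) (hN : ∀ y, G.Adj x y → y = a ∨ y = b)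
    (v : {y : V // y ≠ x}) : vdeg (G2 G x a b hab) v = vdeg G v.val := by
  classical
  have hfin : (G.neighborSet v.val).Finite ∨ True := Or.inr trivial
  rw [show vdeg (G2 G x a b hab) v = (Subtype.val '' ((G2 G x a b hab).neighborSet v)).ncard
    from ncard_sub _, vdeg_eq_ncard]
  by_cases hva : v.val = a
  · have himg : Subtype.val '' ((G2 G x a b hab).neighborSet v)
        = insert b (G.neighborSet a \ {x}) := by
      ext y
      simp only [Set.mem_image, mem_neighborSet, Set.mem_insert_iff, Set.mem_diff,
        Set.mem_singleton_iff]
      constructor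
      · rintro ⟨z, hz, rfl⟩
        rcases hz with hz | ⟨h1, h2⟩ | ⟨h1, h2⟩
        · exact Or.inr ⟨hva ▸ hz, z.prop⟩
        · exact Or.inl h2
        · exact absurd (hva ▸ h1 : a = b) hab
      · rintro (rfl | ⟨hadj, hyx⟩)
        · exact ⟨⟨y, hxb.ne'⟩, Or.inr (Or.inl ⟨hva, rfl⟩), rfl⟩
        · exact ⟨⟨y, hyx⟩, Or.inl (by rw [hva]; exact hadj), rfl⟩
    rw [himg, hva]
    have hbn : b ∉ G.neighborSet a \ {x} := fun hc => hnadj hc.1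
    rw [Set.ncard_insert_of_notMem hbn (Set.toFinite _),
      Set.ncard_diff_singleton_of_mem (s := G.neighborSet a) (by exact hxa.symm)]
    have hpos : 0 < (G.neighborSet a).ncard :=
      (Set.ncard_pos (Set.toFinite _)).mpr ⟨x, hxa.symm⟩
    omega
  · by_cases hvb : v.val = b
    · have himg : Subtype.val '' ((G2 G x a b hab).neighborSet v)
          = insert a (G.neighborSet b \ {x}) := by
        ext y
        simp only [Set.mem_image, mem_neighborSet, Set.mem_insert_iff, Set.mem_diff,
          Set.mem_singleton_iff]
        constructor
        · rintro ⟨z, hz, rfl⟩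
          rcases hz with hz | ⟨h1, h2⟩ | ⟨h1, h2⟩
          · exact Or.inr ⟨hvb ▸ hz, z.prop⟩
          · exact absurd (hvb ▸ h1 : b = a) hab.symm
          · exact Or.inl h2
        · rintro (rfl | ⟨hadj, hyx⟩)
          · exact ⟨⟨y, hxa.ne'⟩, Or.inr (Or.inr ⟨hvb, rfl⟩), rfl⟩
          · exact ⟨⟨y, hyx⟩, Or.inl (by rw [hvb]; exact hadj), rfl⟩
      rw [himg, hvb]
      have han : a ∉ G.neighborSet b \ {x} := fun hc => hnadj hc.1.symm
      rw [Set.ncard_insert_of_notMem han (Set.toFinite _),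
        Set.ncard_diff_singleton_of_mem (s := G.neighborSet b) (by exact hxb.symm)]
      have hpos : 0 < (G.neighborSet b).ncard :=
        (Set.ncard_pos (Set.toFinite _)).mpr ⟨x, hxb.symm⟩
      omega
    · have himg : Subtype.val '' ((G2 G x a b hab).neighborSet v)
          = G.neighborSet v.val := by
        ext y
        simp only [Set.mem_image, mem_neighborSet]
        constructor
        · rintro ⟨z, hz, rfl⟩
          rcases hz with hz | ⟨h1, h2⟩ | ⟨h1, h2⟩
          · exact hz
          · exact absurd h1 hva
          · exact absurd h1 hvb
        · intro hadj
          have hyx : y ≠ x := by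
            rintro rfl
            rcases hN v.val hadj.symm with h1 | h1
            exacts [hva h1, hvb h1]
          exact ⟨⟨y, hyx⟩, Or.inl hadj, rfl⟩
      rw [himg]

include hxa hxb in
lemma outDeg_G2 [Finite V] (hnadj : ¬ G.Adj a b) (hN : ∀ y, G.Adj x y → y = a ∨ y = b)
    {r : V} (hrx : r ≠ x) (v : {y : V // y ≠ x}) :
    outDeg (G2 G x a b hab) ⟨r, hrx⟩ v = outDeg G r v.val := by
  unfold outDeg
  by_cases hv : v.val = r
  · rw [if_pos (Subtype.ext hv), if_pos hv, vdeg_G2 hab hxa hxb hnadj hN]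
  · rw [if_neg (fun hc => hv (by rw [hc])), if_neg hv,
      vdeg_G2 hab hxa hxb hnadj hN]

end Suppress

section DelRoot

variable {V : Type u} (G : SimpleGraph V) (r c : V)

/-- The induced graph on the complement of the root. -/
def G3 : SimpleGraph {y : V // y ≠ r} := G.comap Subtype.val

variable {G r c}

/-- The inclusion homomorphism. -/
def homB : G3 G r →g G := ⟨Subtype.val, fun h => h⟩

lemma homB_inj : Function.Injective (homB (G := G) (r := r)) := Subtype.val_injective

lemma reachB (hNc : ∀ y, G.Adj r y → y = c) :
    ∀ (n : ℕ) (u v : V) (hu : u ≠ r) (hv : v ≠ r) (p : G.Walk u v),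
      p.length ≤ n → (G3 G r).Reachable ⟨u, hu⟩ ⟨v, hv⟩ := by
  intro n
  induction n with
  | zero =>
    intro u v hu hv p hl
    cases p with
    | nil => exact Reachable.refl _
    | cons h q => simp [Walk.length_cons] at hl
  | succ n ih =>
    intro u v hu hv p hl
    cases p with
    | nil => exact Reachable.refl _
    | @cons _ t _ h q =>
      by_cases ht : t = r
      · cases q with
        | nil => exact absurd ht hv
        | @cons _ t₂ _ h₂ q₂ =>
          have ht₂ : t₂ = c := hNc t₂ (ht ▸ h₂)
          have hu' : u = c := hNc u (ht ▸ h).symm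
          have hlen : q₂.length ≤ n := by
            simp only [Walk.length_cons] at hl; omega
          have : t₂ = u := ht₂.trans hu'.symm
          subst this
          exact ih t₂ v hu hv q₂ hlen
      · have hadj : (G3 G r).Adj ⟨u, hu⟩ ⟨t, ht⟩ := h
        exact hadj.reachable.trans
          (ih t v ht hv q (by simp only [Walk.length_cons] at hl; omega))

lemma G3_isTree (hG : G.IsTree) (hcr : c ≠ r) (hNc : ∀ y, G.Adj r y → y = c) :
    (G3 G r).IsTree := by
  constructor
  · haveI : Nonempty {y : V // y ≠ r} := ⟨⟨c, hcr⟩⟩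
    refine Connected.mk fun u v => ?_
    obtain ⟨p⟩ := hG.isConnected.preconnected u.val v.val
    have := reachB hNc p.length u.val v.val u.prop v.prop p le_rfl
    simpa using this
  · intro v cyc hcyc
    exact hG.IsAcyclic (cyc.map homB) (hcyc.map homB_inj)

open Classical in
lemma vdeg_G3 [Finite V] (hrc : G.Adj r c) (hNc : ∀ y, G.Adj r y → y = c)
    (v : {y : V // y ≠ r}) :
    vdeg (G3 G r) v = if v.val = c then vdeg G v.val - 1 else vdeg G v.val := by
  rw [show vdeg (G3 G r) v = (Subtype.val '' ((G3 G r).neighborSet v)).ncard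
    from ncard_sub _, vdeg_eq_ncard]
  have himg : Subtype.val '' ((G3 G r).neighborSet v) = G.neighborSet v.val \ {r} := by
    ext y
    simp only [Set.mem_image, mem_neighborSet, Set.mem_diff, Set.mem_singleton_iff]
    constructor
    · rintro ⟨z, hz, rfl⟩
      exact ⟨hz, z.prop⟩
    · rintro ⟨hadj, hyr⟩
      exact ⟨⟨y, hyr⟩, hadj, rfl⟩
  rw [himg]
  by_cases hvc : v.val = c
  · rw [if_pos hvc, Set.ncard_diff_singleton_of_mem (s := G.neighborSet v.val) (a := r)
      (by rw [hvc]; exact hrc.symm)]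
  · rw [if_neg hvc, Set.diff_singleton_eq_self
      (fun hc => hvc (hNc v.val ((G.mem_neighborSet _ _).mp hc).symm))]

lemma outDeg_G3 [Finite V] (hrc : G.Adj r c) (hNc : ∀ y, G.Adj r y → y = c)
    (v : {y : V // y ≠ r}) :
    outDeg (G3 G r) ⟨c, hrc.ne'⟩ v = outDeg G r v.val := by
  unfold outDeg
  by_cases hvc : v.val = c
  · rw [if_pos (Subtype.ext hvc), if_neg (hvc ▸ hrc.ne' : v.val ≠ r),
      vdeg_G3 hrc hNc, if_pos hvc]
  · rw [if_neg (fun hc => hvc (by rw [hc])), if_neg v.prop, vdeg_G3 hrc hNc, if_neg hvc]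

end DelRoot

theorem aux : ∀ (n : ℕ) {V : Type u} [Fintype V] (G : SimpleGraph V), G.IsTree → ∀ (r : V)
    (w : Sym2 V → NNReal), EquidistantWeight G r w → ∀ (d : V → V → NNReal),
    (∀ u v, ∀ p : G.Walk u v, p.IsPath → d u v = (p.edges.map w).sum) →
    Nat.card {v : V | outDeg G r v = 1} = n →
    ∃ (W : Type u) (f : W ↪ V) (G' : SimpleGraph W) (r' : W) (w' : Sym2 W → NNReal),
      G'.IsTree ∧ EquidistantWeight G' r' w' ∧
      (∀ v' : W, outDeg G' r' v' ≠ 1) ∧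
      (⇑f '' {v' : W | outDeg G' r' v' = 0} = {v : V | outDeg G r v = 0}) ∧
      Nat.card W + n = Nat.card V ∧
      ∀ u v : W, outDeg G r (f u) = 0 → outDeg G r (f v) = 0 →
        ∀ p : G'.Walk u v, p.IsPath → (p.edges.map w').sum = d (f u) (f v) := by
  intro n
  induction n with
  | zero =>
    intro V _ G hG r w hw d hd hcard
    refine ⟨V, Function.Embedding.refl V, G, r, w, hG, hw, ?_, by simp, by simp, ?_⟩
    · intro v' hv'
      haveI : Nonempty {v : V | outDeg G r v = 1} := ⟨⟨v', hv'⟩⟩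
      have hpos := Nat.card_pos (α := {v : V | outDeg G r v = 1})
      omega
    · intro u v _ _ p hp
      exact (hd u v p hp).symm
  | succ n ih =>
    intro V _ G hG r w hw d hd hcard
    classical
    haveI : Nonempty V := hG.isConnected.nonempty
    have hVpos : 0 < Nat.card V := Nat.card_pos
    have hne : {v : V | outDeg G r v = 1}.Nonempty := by
      apply Set.nonempty_of_ncard_ne_zero
      rw [← Nat.card_coe_set_eq, hcard]; omega
    obtain ⟨x, hx⟩ := hne
    have hx : outDeg G r x = 1 := hx
    obtain ⟨K, hK⟩ := hw.2
    by_cases hxr : x = r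
    · -- Case B : the root has degree one; delete it and re-root at its neighbor.
      subst hxr
      have hvdeg : vdeg G x = 1 := by rwa [outDeg, if_pos rfl] at hx
      rw [vdeg_eq_ncard, Set.ncard_eq_one] at hvdeg
      obtain ⟨c, hc⟩ := hvdeg
      have hrc : G.Adj x c := by
        have : c ∈ G.neighborSet x := by rw [hc]; rfl
        exact this
      have hNc : ∀ y, G.Adj x y → y = c := by
        intro y hy
        have : y ∈ G.neighborSet x := hy
        rwa [hc, Set.mem_singleton_iff] at this
      haveI : Fintype {y : V // y ≠ x} := Fintype.ofFinite _
      set G₂ := G3 G x with hG₂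
      have htree₂ : G₂.IsTree := G3_isTree hG hrc.ne' hNc
      set r₂ : {y : V // y ≠ x} := ⟨c, hrc.ne'⟩ with hr₂
      set w₂ : Sym2 {y : V // y ≠ x} → NNReal :=
        fun e => w (Sym2.map Subtype.val e) with hw₂def
      have hout : ∀ v, outDeg G₂ r₂ v = outDeg G x v.val := outDeg_G3 hrc hNc
      -- mapping walks
      have hmapPath : ∀ {u v : {y : V // y ≠ x}} (p : G₂.Walk u v), p.IsPath →
          (p.map homB).IsPath := fun p hp => Walk.map_isPath_of_injective homB_inj hp
      have hmapSum : ∀ {u v : {y : V // y ≠ x}} (p : G₂.Walk u v),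
          ((p.map homB).edges.map w).sum = (p.edges.map w₂).sum := by
        intro u v p
        rw [Walk.edges_map, List.map_map]
        rfl
      have hw₂ : EquidistantWeight G₂ r₂ w₂ := by
        refine ⟨fun e he => ?_, ⟨K - w s(x, c), fun u hu p hp => ?_⟩⟩
        · induction e with
          | _ u v =>
            exact hw.1 _ ((G.mem_edgeSet).mpr he)
        · have hu' : outDeg G x u.val = 0 := by rw [← hout u]; exact hu
          have hr2 : x ∉ (p.map homB).support := by
            rw [Walk.support_map]
            intro hmem
            obtain ⟨z, _, hz⟩ := List.mem_map.mp hmem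
            exact z.prop hz
          have hcons : (Walk.cons hrc (p.map homB)).IsPath :=
            (hmapPath p hp).cons hr2
          have hKeq := hK u.val hu' (Walk.cons hrc (p.map homB)) hcons
          have hKeq : w s(x, c) + ((p.map homB).edges.map w).sum = K := hKeq
          rw [hmapSum p] at hKeq
          exact eq_tsub_of_add_eq (by rw [add_comm]; exact hKeq)
      have hd₂ : ∀ (u v : {y : V // y ≠ x}) (p : G₂.Walk u v), p.IsPath →
          d u.val v.val = (p.edges.map w₂).sum := by
        intro u v p hp
        rw [hd u.val v.val (p.map homB) (hmapPath p hp)]; exact hmapSum p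
      have hcount : Nat.card {v : {y : V // y ≠ x} | outDeg G₂ r₂ v = 1} = n := by
        have hseteq : {v : {y : V // y ≠ x} | outDeg G₂ r₂ v = 1}
            = {v : {y : V // y ≠ x} | outDeg G x v.val = 1} := by
          ext v; rw [Set.mem_setOf_eq, Set.mem_setOf_eq, hout]
        rw [hseteq, ncard_sub]
        have himg : Subtype.val '' {v : {y : V // y ≠ x} | outDeg G x v.val = 1}
            = {v : V | outDeg G x v = 1} \ {x} := by
          ext y
          simp only [Set.mem_image, Set.mem_setOf_eq, Set.mem_diff, Set.mem_singleton_iff]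
          constructor
          · rintro ⟨z, hz, rfl⟩; exact ⟨hz, z.prop⟩
          · rintro ⟨h1, h2⟩; exact ⟨⟨y, h2⟩, h1, rfl⟩
        rw [himg, Set.ncard_diff_singleton_of_mem
            (show x ∈ {v : V | outDeg G x v = 1} from hx),
          ← Nat.card_coe_set_eq, hcard]
        omega
      obtain ⟨W, f, G', r', w', ht', hw', hone', hleaf', hcardW, hmet'⟩ :=
        ih G₂ htree₂ r₂ w₂ hw₂ (fun u v => d u.val v.val)
          (fun u v p hp => hd₂ u v p hp) hcount
      have hcardV' : Nat.card {y : V // y ≠ x} + 1 = Nat.card V := by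
        have h1 : Nat.card {y : V // y ≠ x} = ({y : V | y ≠ x}).ncard :=
          Nat.card_coe_set_eq _
        have h2 : {y : V | y ≠ x} = Set.univ \ {x} := by
          ext y; simp
        rw [h1, h2, Set.ncard_diff_singleton_of_mem (Set.mem_univ x),
          Set.ncard_univ]
        omega
      refine ⟨W, f.trans (Function.Embedding.subtype _), G', r', w', ht', hw', hone', ?_, ?_, ?_⟩
      · have hco : ⇑(f.trans (Function.Embedding.subtype _)) = Subtype.val ∘ ⇑f := rfl
        rw [hco, Set.image_comp, hleaf']
        ext y
        simp only [Set.mem_image, Set.mem_setOf_eq]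
        constructor
        · rintro ⟨z, hz, rfl⟩
          have hz' : outDeg G₂ r₂ z = 0 := hz
          rw [hout] at hz'
          exact hz'
        · intro hy
          have hyx : y ≠ x := by rintro rfl; rw [hx] at hy; exact one_ne_zero hy
          exact ⟨⟨y, hyx⟩, show outDeg G₂ r₂ ⟨y, hyx⟩ = 0 by rw [hout]; exact hy, rfl⟩
      · omega
      · intro u v hu hv p hp
        have hu' : outDeg G₂ r₂ (f u) = 0 := by rw [hout]; exact hu
        have hv' : outDeg G₂ r₂ (f v) = 0 := by rw [hout]; exact hv
        exact hmet' u v hu' hv' p hp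
    · -- Case A : x is an internal vertex of degree 2; suppress it.
      have hrx : r ≠ x := fun h => hxr h.symm
      have hvdeg : vdeg G x = 2 := by
        rw [outDeg, if_neg hxr] at hx
        have h1 : 0 < vdeg G x := by
          rw [vdeg_eq_ncard]
          refine (Set.ncard_pos (Set.toFinite _)).mpr ?_
          by_contra hemp
          rw [Set.not_nonempty_iff_eq_empty] at hemp
          rw [vdeg_eq_ncard, hemp] at hx
          simp at hx
        omega
      rw [vdeg_eq_ncard, Set.ncard_eq_two] at hvdeg
      obtain ⟨a, b, hab, hNx⟩ := hvdeg
      have hxa : G.Adj x a := by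
        have : a ∈ G.neighborSet x := by rw [hNx]; exact Set.mem_insert _ _
        exact this
      have hxb : G.Adj x b := by
        have : b ∈ G.neighborSet x := by rw [hNx]; exact Set.mem_insert_of_mem _ rfl
        exact this
      have hN : ∀ y, G.Adj x y → y = a ∨ y = b := by
        intro y hy
        have : y ∈ G.neighborSet x := hy
        rw [hNx] at this
        simpa using this
      have hnadj : ¬ G.Adj a b := by
        intro hadj
        have hp1 : (Walk.cons hadj Walk.nil).IsPath := by
          rw [Walk.cons_isPath_iff]
          refine ⟨Walk.IsPath.nil, ?_⟩
          simp [hab]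
        have hp2 : (Walk.cons hxa.symm (Walk.cons hxb Walk.nil)).IsPath := by
          rw [Walk.cons_isPath_iff, Walk.cons_isPath_iff]
          refine ⟨⟨Walk.IsPath.nil, ?_⟩, ?_⟩
          · simp [hxb.ne]
          · simp [hxa.ne', hab]
        have heq := (hG.existsUnique_path a b).unique hp1 hp2
        have := congrArg Walk.length heq
        simp [Walk.length_cons] at this
      haveI : Fintype {y : V // y ≠ x} := Fintype.ofFinite _
      set G₂ := G2 G x a b hab with hG₂
      have htree₂ : G₂.IsTree := G2_isTree hab hxa hxb hG hnadj hN
      set r₂ : {y : V // y ≠ x} := ⟨r, hrx⟩ with hr₂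
      set w₂ : Sym2 {y : V // y ≠ x} → NNReal := w2 w x a b with hw₂def
      have hout : ∀ v, outDeg G₂ r₂ v = outDeg G r v.val :=
        outDeg_G2 hab hxa hxb hnadj hN hrx
      have hphiPath : ∀ {u v : {y : V // y ≠ x}} (p : G₂.Walk u v), p.IsPath →
          (phi hab hxa hxb p).IsPath :=
        fun p hp => (phi_strong hab hxa hxb hnadj p hp).1
      have hw₂ : EquidistantWeight G₂ r₂ w₂ := by
        refine ⟨fun e he => ?_, ⟨K, fun u hu p hp => ?_⟩⟩
        · induction e with
          | _ u v =>
            rw [hw₂def, w2]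
            split_ifs with hcase
            · exact add_pos (hw.1 _ (G.mem_edgeSet.mpr hxa)) (hw.1 _ (G.mem_edgeSet.mpr hxb))
            · rw [Sym2.map_pair_eq]
              refine hw.1 _ (G.mem_edgeSet.mpr ?_)
              rcases he with he | ⟨h1, h2⟩ | ⟨h1, h2⟩
              · exact he
              · exact absurd (by rw [Sym2.map_pair_eq, h1, h2]) hcase
              · exact absurd (by rw [Sym2.map_pair_eq, h1, h2, Sym2.eq_swap]) hcase
        · have hu' : outDeg G r u.val = 0 := by rw [← hout u]; exact hu
          rw [hw₂def, ← phi_sum hab hxa hxb hnadj w p]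
          exact hK u.val hu' (phi hab hxa hxb p) (hphiPath p hp)
      have hd₂ : ∀ (u v : {y : V // y ≠ x}) (p : G₂.Walk u v), p.IsPath →
          d u.val v.val = (p.edges.map w₂).sum := by
        intro u v p hp
        rw [hd u.val v.val (phi hab hxa hxb p) (hphiPath p hp), hw₂def,
          phi_sum hab hxa hxb hnadj w p]
      have hcount : Nat.card {v : {y : V // y ≠ x} | outDeg G₂ r₂ v = 1} = n := by
        have hseteq : {v : {y : V // y ≠ x} | outDeg G₂ r₂ v = 1}
            = {v : {y : V // y ≠ x} | outDeg G r v.val = 1} := by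
          ext v; rw [Set.mem_setOf_eq, Set.mem_setOf_eq, hout]
        rw [hseteq, ncard_sub]
        have himg : Subtype.val '' {v : {y : V // y ≠ x} | outDeg G r v.val = 1}
            = {v : V | outDeg G r v = 1} \ {x} := by
          ext y
          simp only [Set.mem_image, Set.mem_setOf_eq, Set.mem_diff, Set.mem_singleton_iff]
          constructor
          · rintro ⟨z, hz, rfl⟩; exact ⟨hz, z.prop⟩
          · rintro ⟨h1, h2⟩; exact ⟨⟨y, h2⟩, h1, rfl⟩
        rw [himg, Set.ncard_diff_singleton_of_mem
            (show x ∈ {v : V | outDeg G r v = 1} from hx),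
          ← Nat.card_coe_set_eq, hcard]
        omega
      obtain ⟨W, f, G', r', w', ht', hw', hone', hleaf', hcardW, hmet'⟩ :=
        ih G₂ htree₂ r₂ w₂ hw₂ (fun u v => d u.val v.val)
          (fun u v p hp => hd₂ u v p hp) hcount
      have hcardV' : Nat.card {y : V // y ≠ x} + 1 = Nat.card V := by
        have h1 : Nat.card {y : V // y ≠ x} = ({y : V | y ≠ x}).ncard :=
          Nat.card_coe_set_eq _
        have h2 : {y : V | y ≠ x} = Set.univ \ {x} := by
          ext y; simp
        rw [h1, h2, Set.ncard_diff_singleton_of_mem (Set.mem_univ x),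
          Set.ncard_univ]
        omega
      refine ⟨W, f.trans (Function.Embedding.subtype _), G', r', w', ht', hw', hone', ?_, ?_, ?_⟩
      · have hco : ⇑(f.trans (Function.Embedding.subtype _)) = Subtype.val ∘ ⇑f := rfl
        rw [hco, Set.image_comp, hleaf']
        ext y
        simp only [Set.mem_image, Set.mem_setOf_eq]
        constructor
        · rintro ⟨z, hz, rfl⟩
          have hz' : outDeg G₂ r₂ z = 0 := hz
          rw [hout] at hz'
          exact hz'
        · intro hy
          have hyx : y ≠ x := by rintro rfl; rw [hx] at hy; exact one_ne_zero hy
          exact ⟨⟨y, hyx⟩, show outDeg G₂ r₂ ⟨y, hyx⟩ = 0 by rw [hout]; exact hy, rfl⟩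
      · omega
      · intro u v hu hv p hp
        have hu' : outDeg G₂ r₂ (f u) = 0 := by rw [hout]; exact hu
        have hv' : outDeg G₂ r₂ (f v) = 0 := by rw [hout]; exact hv
        exact hmet' u v hu' hv' p hp

end Stmt13

open Stmt13 in
/-- Every equidistant tree `T(r, w)` having a vertex of out-degree `≥ 2`
can be replaced by an equidistant tree `T^∇(r^∇, w^∇)` without vertices of out-degree
one, with the same `V₀⁺`, with `V(T^∇) ⊆ V(T)`, with
`|V(T^∇)| + |V₁⁺(T)| = |V(T)|`, and inducing the same metric on `V₀⁺`. -/
theorem stmt13_exists_nabla_tree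
    {V : Type*} [Fintype V] (G : SimpleGraph V) (hG : G.IsTree) (r : V)
    (w : Sym2 V → NNReal) (hw : EquidistantWeight G r w)
    (d : V → V → NNReal)
    (hd : ∀ u v, ∀ p : G.Walk u v, p.IsPath → d u v = (p.edges.map w).sum)
    (hbranch : ∃ v : V, 2 ≤ outDeg G r v) :
    ∃ (S : Set V) (G' : SimpleGraph S) (r' : S) (w' : Sym2 S → NNReal),
      G'.IsTree ∧ EquidistantWeight G' r' w' ∧
      (∀ v' : S, outDeg G' r' v' ≠ 1) ∧
      (Subtype.val '' {v' : S | outDeg G' r' v' = 0} = {v : V | outDeg G r v = 0}) ∧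
      Nat.card S + Nat.card {v : V | outDeg G r v = 1} = Nat.card V ∧
      ∀ u v : S, outDeg G r u.val = 0 → outDeg G r v.val = 0 →
        ∀ p : G'.Walk u v, p.IsPath → (p.edges.map w').sum = d u.val v.val := by
  classical
  obtain ⟨W, f, G', r', w', ht', hw', hone', hleaf', hcardW, hmet'⟩ :=
    aux (Nat.card {v : V | outDeg G r v = 1}) G hG r w hw d hd rfl
  set S : Set V := Set.range ⇑f with hS
  let e : W ≃ ↥S := Equiv.ofInjective ⇑f f.injective
  have he_val : ∀ a : W, ((e a) : V) = f a := fun a => rfl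
  have hval : ∀ u : ↥S, f (e.symm u) = (u : V) := by
    intro u
    rw [← he_val (e.symm u), e.apply_symm_apply]
  let G'' : SimpleGraph ↥S := SimpleGraph.comap (⇑e.symm) G'
  let ι : G'' ≃g G' := ⟨e.symm, Iff.rfl⟩
  let π : G'' →g G' := ι.toHom
  have hπinj : Function.Injective ⇑π := e.symm.injective
  let r'' : ↥S := e r'
  let w'' : Sym2 ↥S → NNReal := fun s => w' (Sym2.map (⇑e.symm) s)
  have hvdeg : ∀ v : ↥S, vdeg G'' v = vdeg G' (e.symm v) :=
    fun v => Nat.card_congr (ι.mapNeighborSet v)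
  have houtd : ∀ v : ↥S, outDeg G'' r'' v = outDeg G' r' (e.symm v) := by
    intro v
    unfold outDeg
    by_cases hv : v = r''
    · rw [if_pos hv, if_pos (by rw [hv]; exact e.symm_apply_apply r'), hvdeg]
    · rw [if_neg hv, if_neg (fun hc => hv (by rw [← e.apply_symm_apply v, hc])), hvdeg]
  have hqsum : ∀ (u v : ↥S) (q : G''.Walk u v),
      ((q.map π).edges.map w').sum = (q.edges.map w'').sum := by
    intro u v q
    rw [Walk.edges_map, List.map_map]
    rfl
  refine ⟨S, G'', r'', w'', ?_, ?_, ?_, ?_, ?_, ?_⟩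
  · constructor
    · exact (ι.connected_iff).mpr ht'.isConnected
    · intro v cyc hcyc
      exact ht'.IsAcyclic (cyc.map π) (hcyc.map hπinj)
  · obtain ⟨K', hK'⟩ := hw'.2
    refine ⟨fun s hs => ?_, ⟨K', fun u hu q hq => ?_⟩⟩
    · induction s with
      | _ uu vv =>
        have hadj : G'.Adj (e.symm uu) (e.symm vv) := hs
        have : w'' s(uu, vv) = w' s(e.symm uu, e.symm vv) := by
          show w' (Sym2.map (⇑e.symm) s(uu, vv)) = _
          rw [Sym2.map_pair_eq]
        rw [this]
        exact hw'.1 _ (G'.mem_edgeSet.mpr hadj)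
    · have hu' : outDeg G' r' (e.symm u) = 0 := by rw [← houtd]; exact hu
      have hqp : (q.map π).IsPath := Walk.map_isPath_of_injective hπinj hq
      have hres := hK' (e.symm u) hu'
        ((q.map π).copy (e.symm_apply_apply r') rfl)
        (by rwa [Walk.isPath_copy])
      rw [Walk.edges_copy, hqsum] at hres
      exact hres
  · intro v'' hv''
    rw [houtd] at hv''
    exact hone' _ hv''
  · rw [← hleaf']
    ext y
    simp only [Set.mem_image, Set.mem_setOf_eq]
    constructor
    · rintro ⟨z, hz, rfl⟩
      have hz' : outDeg G' r' (e.symm z) = 0 := by rw [← houtd]; exact hz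
      exact ⟨e.symm z, hz', hval z⟩
    · rintro ⟨z, hz, rfl⟩
      refine ⟨e z, ?_, (he_val z).symm ▸ rfl⟩
      show outDeg G'' r'' (e z) = 0
      rw [houtd, e.symm_apply_apply]
      exact hz
  · rw [Nat.card_congr e.symm]
    exact hcardW
  · intro u v hu hv q hq
    have hu' : outDeg G r (f (e.symm u)) = 0 := by rw [hval]; exact hu
    have hv' : outDeg G r (f (e.symm v)) = 0 := by rw [hval]; exact hv
    have hres := hmet' (e.symm u) (e.symm v) hu' hv' (q.map π)
      (Walk.map_isPath_of_injective hπinj hq)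
    rw [hqsum, hval, hval] at hres
    exact hres
end
end

section
/- Let T be a tree with strictly positive weight w such that |V(T)| ≥ 2, let L be the set of leaves of T, and suppose the restriction ρ of the additive metric d_w to L × L is an ultrametric on L. Then the following are equivalent: (1) there is r ∈ L such that the weighted rooted tree T(r,w) is equidistant; (2) there are c ∈ L and t > 0 such that L = {x ∈ L : ρ(x,c) = t} ∪ {c}; (3) there is r ∈ V(T) such that T(r,w) is planted and equidistant. -/
open SimpleGraph

noncomputable section

variable {V : Type*}

section AuxLemmas


lemma vdeg_eq_degree [Fintype V] (G : SimpleGraph V) [DecidableRel G.Adj] (v : V) :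
    vdeg G v = G.degree v := by
  rw [vdeg, ← SimpleGraph.card_neighborSet_eq_degree, Nat.card_eq_fintype_card]

lemma one_le_vdeg [Fintype V] (G : SimpleGraph V) [DecidableRel G.Adj] (hconn : G.Connected)
    (hcard : 2 ≤ Nat.card V) (v : V) : 1 ≤ vdeg G v := by
  rw [vdeg_eq_degree]
  have : ∃ u, u ≠ v := by
    rw [Nat.card_eq_fintype_card] at hcard
    exact Fintype.exists_ne_of_one_lt_card (by omega) v
  obtain ⟨u, hu⟩ := this
  obtain ⟨p⟩ := hconn.preconnected v u
  cases p with
  | nil => exact absurd rfl hu.symm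
  | cons h q =>
    have : 0 < G.degree v := G.degree_pos_iff_exists_adj v |>.2 ⟨_, h⟩
    omega

lemma exists_other_leaf [Fintype V] [DecidableEq V] (G : SimpleGraph V) [DecidableRel G.Adj] (hG : G.IsTree)
    (hcard : 2 ≤ Nat.card V) (r : V) (hr : vdeg G r = 1) :
    ∃ u, u ≠ r ∧ vdeg G u = 1 := by
  by_contra h
  push_neg at h
  have h2 : ∀ u, u ≠ r → 2 ≤ G.degree u := by
    intro u hu
    have h1 := one_le_vdeg G hG.isConnected hcard u
    have := h u hu
    rw [vdeg_eq_degree] at h1 this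
    omega
  have hsum := G.sum_degrees_eq_twice_card_edges
  have hedge := hG.card_edgeFinset
  have hrd : G.degree r = 1 := by rw [← vdeg_eq_degree]; exact hr
  have hbound : 2 * ((Finset.univ.erase r).card) ≤ ∑ v ∈ Finset.univ.erase r, G.degree v := by
    calc 2 * (Finset.univ.erase r).card = (Finset.univ.erase r).card • 2 := by
          rw [smul_eq_mul, mul_comm]
      _ ≤ _ := Finset.card_nsmul_le_sum _ _ _ (fun x hx => h2 x (Finset.ne_of_mem_erase hx))
  have hsplit : ∑ v, G.degree v = G.degree r + ∑ v ∈ Finset.univ.erase r, G.degree v := by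
    rw [← Finset.add_sum_erase _ _ (Finset.mem_univ r)]
  have hcarderase : (Finset.univ.erase r).card = Fintype.card V - 1 := by
    rw [Finset.card_erase_of_mem (Finset.mem_univ r), Finset.card_univ]
  rw [Nat.card_eq_fintype_card] at hcard
  omega

lemma sum_edges_reverse {G : SimpleGraph V} (w : Sym2 V → NNReal) {u v : V} (p : G.Walk u v) :
    ((p.reverse.edges).map w).sum = (p.edges.map w).sum := by
  rw [Walk.edges_reverse, List.map_reverse, List.sum_reverse]

lemma path_sum_pos {G : SimpleGraph V} (w : Sym2 V → NNReal)
    (hw : ∀ e ∈ G.edgeSet, 0 < w e) {u v : V} (hne : u ≠ v) (p : G.Walk u v) :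
    0 < (p.edges.map w).sum := by
  cases p with
  | nil => exact absurd rfl hne
  | cons h q =>
    simp only [Walk.edges_cons, List.map_cons, List.sum_cons]
    exact lt_of_lt_of_le (hw _ h) le_self_add

end AuxLemmas

/-- Let `T(w)` be a weighted tree with `|V(T)| ≥ 2` and strictly positive
weight, `L` its set of leaves, and suppose `d_w` restricted to `L` is an ultrametric.
TFAE: (1) there is `r ∈ L` with `T(r, w)` equidistant; (2) `(L, ρ)` is a sphere with an
added center; (3) there is `r ∈ V(T)` with `T(r, w)` planted and equidistant. -/
theorem stmt16_sphere_with_added_center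
    {V : Type*} [Fintype V] (G : SimpleGraph V) (hG : G.IsTree)
    (hcard : 2 ≤ Nat.card V)
    (w : Sym2 V → NNReal) (hw : ∀ e ∈ G.edgeSet, 0 < w e)
    (d : V → V → NNReal)
    (hd : ∀ u v, ∀ p : G.Walk u v, p.IsPath → d u v = (p.edges.map w).sum)
    (L : Set V) (hL : L = {v | vdeg G v ≤ 1})
    (hultra : IsUltrametricOn d L) :
    ((∃ r ∈ L, EquidistantWeight G r w) ↔
      (∃ c ∈ L, ∃ t : NNReal, 0 < t ∧ L = {x ∈ L | d x c = t} ∪ {c})) ∧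
    ((∃ c ∈ L, ∃ t : NNReal, 0 < t ∧ L = {x ∈ L | d x c = t} ∪ {c}) ↔
      (∃ r : V, outDeg G r r = 1 ∧ EquidistantWeight G r w)) := by
  classical
  have hdeg : ∀ v, 1 ≤ vdeg G v := one_le_vdeg G hG.isConnected hcard
  have hmemL : ∀ v, v ∈ L ↔ vdeg G v = 1 := by
    intro v; rw [hL]; simp only [Set.mem_setOf_eq]; have := hdeg v; omega
  have hout : ∀ r u : V, vdeg G r = 1 → (outDeg G r u = 0 ↔ (u ≠ r ∧ vdeg G u = 1)) := by
    intro r u hr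
    unfold outDeg
    split_ifs with h
    · subst h
      simp only [hr, ne_eq, not_true_eq_false, false_and, iff_false]
      omega
    · have := hdeg u
      constructor
      · intro h0; exact ⟨h, by omega⟩
      · intro ⟨_, h1⟩; omega
  have main : (∃ r ∈ L, EquidistantWeight G r w) ↔
      (∃ c ∈ L, ∃ t : NNReal, 0 < t ∧ L = {x ∈ L | d x c = t} ∪ {c}) := by
    constructor
    · rintro ⟨r, hrL, hwpos, K, hK⟩
      have hr1 := (hmemL r).1 hrL
      refine ⟨r, hrL, K, ?_, ?_⟩
      · obtain ⟨u, hur, hu1⟩ := exists_other_leaf G hG hcard r hr1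
        obtain ⟨p⟩ := hG.isConnected.preconnected r u
        have hsum := hK u ((hout r u hr1).2 ⟨hur, hu1⟩) p.toPath p.toPath.2
        calc (0 : NNReal) < ((p.toPath.1.edges.map w).sum) :=
              path_sum_pos w hw hur.symm p.toPath.1
          _ = K := hsum
      · ext x
        simp only [Set.mem_union, Set.mem_setOf_eq, Set.mem_singleton_iff]
        constructor
        · intro hx
          by_cases hxr : x = r
          · exact Or.inr hxr
          · obtain ⟨p⟩ := hG.isConnected.preconnected r x
            have hsum := hK x ((hout r x hr1).2 ⟨hxr, (hmemL x).1 hx⟩) p.toPath p.toPath.2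
            refine Or.inl ⟨hx, ?_⟩
            rw [hd x r p.toPath.1.reverse p.toPath.2.reverse, sum_edges_reverse w, hsum]
        · rintro (⟨hx, _⟩ | rfl)
          · exact hx
          · exact hrL
    · rintro ⟨c, hcL, t, ht, hsphere⟩
      have hc1 := (hmemL c).1 hcL
      refine ⟨c, hcL, hw, t, ?_⟩
      intro u hu p hp
      obtain ⟨huc, hu1⟩ := (hout c u hc1).1 hu
      have huL : u ∈ L := (hmemL u).2 hu1
      rw [hsphere] at huL
      rcases huL with ⟨-, hdu⟩ | h
      · calc (p.edges.map w).sum = (p.reverse.edges.map w).sum := (sum_edges_reverse w p).symm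
          _ = d u c := (hd u c p.reverse hp.reverse).symm
          _ = t := hdu
      · exact absurd h huc
  have lr : (∃ r ∈ L, EquidistantWeight G r w) ↔
      (∃ r : V, outDeg G r r = 1 ∧ EquidistantWeight G r w) := by
    constructor
    · rintro ⟨r, hrL, he⟩
      refine ⟨r, ?_, he⟩
      unfold outDeg
      simp [(hmemL r).1 hrL]
    · rintro ⟨r, hr1, he⟩
      refine ⟨r, (hmemL r).2 ?_, he⟩
      unfold outDeg at hr1
      simpa using hr1
  exact ⟨main, main.symm.trans lr⟩
end
end

section
/- Let T(r,w) be a planted equidistant weighted rooted tree with V_2^{++}(T) = {v ∈ V(T) : δ⁺(v) ≥ 2} nonempty, and let L be the set of leaves of T. Then the restriction of the additive metric d_w to L × L is an ultrametric on L if and only if 2·dist(r, V_2^{++}(T)) ≥ dist(r, V_0^+(T)), where dist(r, A) = min{d_w(r,a) : a ∈ A} for a nonempty subset A of V(T). -/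
open SimpleGraph

noncomputable section

variable {V : Type*}

namespace Stmt17Aux
open SimpleGraph.Walk

variable {V : Type*} {G : SimpleGraph V} {r : V} {w : Sym2 V → NNReal} {d : V → V → NNReal}

/-- `d u u = 0`. -/
lemma d_self (hd : ∀ u v, ∀ p : G.Walk u v, p.IsPath → d u v = (p.edges.map w).sum)
    (u : V) : d u u = 0 := by
  simpa using hd u u Walk.nil IsPath.nil

lemma path_unique (hG : G.IsTree) {u v : V} {p q : G.Walk u v} (hp : p.IsPath)
    (hq : q.IsPath) : p = q :=
  ((hG.existsUnique_path u v).unique hp hq)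

lemma exists_path (hG : G.IsTree) (u v : V) : ∃ p : G.Walk u v, p.IsPath :=
  (hG.existsUnique_path u v).exists

lemma d_symm (hG : G.IsTree)
    (hd : ∀ u v, ∀ p : G.Walk u v, p.IsPath → d u v = (p.edges.map w).sum)
    (u v : V) : d u v = d v u := by
  obtain ⟨p, hp⟩ := exists_path hG u v
  rw [hd u v p hp, hd v u p.reverse hp.reverse, edges_reverse, List.map_reverse,
    List.sum_reverse]

lemma d_eq_zero_iff (hG : G.IsTree) (hpos : ∀ e ∈ G.edgeSet, 0 < w e)
    (hd : ∀ u v, ∀ p : G.Walk u v, p.IsPath → d u v = (p.edges.map w).sum)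
    (u v : V) : d u v = 0 ↔ u = v := by
  constructor
  · intro h
    by_contra hne
    obtain ⟨p, hp⟩ := exists_path hG u v
    obtain ⟨a, ha, q, rfl⟩ := Walk.exists_eq_cons_of_ne hne p
    rw [hd u v _ hp] at h
    simp only [edges_cons, List.map_cons, List.sum_cons, add_eq_zero] at h
    exact absurd h.1 (hpos _ (G.mem_edgeSet.2 ha)).ne'
  · rintro rfl; exact d_self hd u

/-- Splitting at an interior vertex. -/
lemma d_split
    (hd : ∀ u v, ∀ p : G.Walk u v, p.IsPath → d u v = (p.edges.map w).sum)
    {u v c : V} {p : G.Walk u v} (hp : p.IsPath) (hc : c ∈ p.support) :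
    d u v = d u c + d c v := by
  classical
  conv_lhs => rw [hd u v p hp, ← p.take_spec hc]
  rw [edges_append, List.map_append, List.sum_append,
    ← hd u c _ (hp.takeUntil hc), ← hd c v _ (hp.dropUntil hc)]


/-- The previous vertex of `c` on a path ending at `c` is unique among neighbors. -/
lemma uniq_prev (hG : G.IsTree) {u c : V} {p : G.Walk u c} (hp : p.IsPath)
    {a₁ a₂ : V} (h₁ : a₁ ∈ p.support) (h₂ : a₂ ∈ p.support)
    (ha₁ : G.Adj a₁ c) (ha₂ : G.Adj a₂ c) : a₁ = a₂ := by
  classical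
  have key : ∀ a (ha : G.Adj a c) (h : a ∈ p.support),
      p.edges = (p.takeUntil a h).edges ++ [s(a, c)] := by
    intro a ha h
    have hdrop : p.dropUntil a h = Walk.cons ha Walk.nil :=
      path_unique hG (hp.dropUntil h) (by simp [ha.ne])
    conv_lhs => rw [← p.take_spec h]
    rw [edges_append, hdrop]
    simp
  have h12 : (p.takeUntil a₁ h₁).edges ++ [s(a₁, c)]
      = (p.takeUntil a₂ h₂).edges ++ [s(a₂, c)] := by
    rw [← key a₁ ha₁ h₁, ← key a₂ ha₂ h₂]
  have := congrArg List.reverse h12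
  simp only [List.reverse_append, List.reverse_cons, List.reverse_nil, List.nil_append,
    List.singleton_append, List.cons.injEq] at this
  rcases Sym2.eq_iff.1 this.1 with ⟨h, -⟩ | ⟨h, -⟩
  · exact h
  · exact absurd h ha₁.ne

/-- Depth relation: a vertex after `c'` on a path from `r` is deeper. -/
lemma depth_after [DecidableEq V] (hG : G.IsTree)
    (hd : ∀ u v, ∀ p : G.Walk u v, p.IsPath → d u v = (p.edges.map w).sum)
    {x c c' : V} {P : G.Walk r x} (hP : P.IsPath) (hc' : c' ∈ P.support)
    (hc : c ∈ (P.dropUntil c' hc').support) :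
    d r c = d r c' + d c' c := by
  classical
  have e1 : d r x = d r c' + d c' x := d_split hd hP hc'
  have e2 : d c' x = d c' c + d c x := d_split hd (hP.dropUntil hc') hc
  have e3 : d r x = d r c + d c x :=
    d_split hd hP (P.support_dropUntil_subset hc' hc)
  have : d r c + d c x = (d r c' + d c' c) + d c x := by
    rw [← e3, e1, e2]; ring
  exact add_right_cancel this

lemma vdeg_le_one_of_not_two {v : V} [Fintype V] (h : ∀ a b : V, G.Adj v a → G.Adj v b → a = b) :
    vdeg G v ≤ 1 := by
  rw [vdeg, Nat.card_coe_set_eq]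
  by_contra hlt
  obtain ⟨a, b, ha, hb, hab⟩ := (Set.one_lt_ncard_iff (s := G.neighborSet v) (Set.toFinite _)).1 (by omega)
  exact hab (h a b ha hb)

lemma two_neighbors {v : V} [Fintype V] (hv : 2 ≤ vdeg G v) :
    ∃ a b, G.Adj v a ∧ G.Adj v b ∧ a ≠ b := by
  rw [vdeg, Nat.card_coe_set_eq] at hv
  obtain ⟨a, b, ha, hb, hab⟩ := (Set.one_lt_ncard_iff (s := G.neighborSet v) (Set.toFinite _)).1 (by omega)
  exact ⟨a, b, ha, hb, hab⟩


lemma three_le_vdeg {v a b c : V} [Fintype V] (ha : G.Adj v a) (hb : G.Adj v b)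
    (hc : G.Adj v c) (hab : a ≠ b) (hac : a ≠ c) (hbc : b ≠ c) : 3 ≤ vdeg G v := by
  rw [vdeg, Nat.card_coe_set_eq]
  have := (Set.two_lt_ncard_iff (s := G.neighborSet v) (Set.toFinite _)).2
    ⟨a, b, c, ha, hb, hc, hab, hac, hbc⟩
  omega

/-- Every path can be extended (within paths from `r`) to end at a leaf. -/
lemma descend [Fintype V] (hG : G.IsTree) :
    ∀ (n : ℕ) (c : V) (p : G.Walk r c), p.IsPath → Fintype.card V - p.length ≤ n →
    ∃ (x : V) (q : G.Walk c x), (p.append q).IsPath ∧ vdeg G x ≤ 1 := by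
  intro n
  induction n with
  | zero =>
    intro c p hp hn
    exact absurd hp.length_lt (by omega)
  | succ n ih =>
    intro c p hp hn
    by_cases hc : vdeg G c ≤ 1
    · exact ⟨c, Walk.nil, by simpa using hp, hc⟩
    · obtain ⟨a, b, ha, hb, hab⟩ := two_neighbors (G := G) (v := c) (by omega)
      have hnotin : ∃ a, G.Adj c a ∧ a ∉ p.support := by
        by_contra h
        push_neg at h
        exact hab (uniq_prev hG hp (h a ha) (h b hb) ha.symm hb.symm)
      obtain ⟨a, ha, hans⟩ := hnotin
      have hcp : (p.concat ha).IsPath := by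
        rw [isPath_def, support_concat, List.nodup_append]
        exact ⟨hp.support_nodup, List.nodup_singleton a,
          by intro x hx b hb hxb; simp at hb; subst hb; subst hxb; exact hans hx⟩
      have hlt := hp.length_lt
      obtain ⟨x, q, hq, hleaf⟩ := ih a (p.concat ha) hcp
        (by rw [length_concat]; omega)
      refine ⟨x, Walk.cons ha q, ?_, hleaf⟩
      have h2 : (p.append (Walk.cons ha Walk.nil)).append q
          = p.append (Walk.cons ha q) := by
        rw [← Walk.append_assoc]; simp
      rw [concat_eq_append] at hq
      rwa [h2] at hq


lemma adj_eq_of_vdeg_le_one [Fintype V] {v a b : V} (h : vdeg G v ≤ 1)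
    (ha : G.Adj v a) (hb : G.Adj v b) : a = b := by
  by_contra hab
  have := (Set.one_lt_ncard_iff (s := G.neighborSet v) (Set.toFinite _)).2 ⟨a, b, ha, hb, hab⟩
  rw [← Nat.card_coe_set_eq, ← vdeg] at this
  omega

lemma tail_nodup_of_isPath {u v : V} {p : G.Walk u v} (hp : p.IsPath) :
    p.support.tail.Nodup := by
  have := hp.support_nodup
  rw [p.support_eq_cons] at this
  exact this.of_cons

lemma start_not_mem_tail_support {u v : V} {p : G.Walk u v} (hp : p.IsPath) :
    u ∉ p.support.tail := by
  have := hp.support_nodup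
  rw [p.support_eq_cons, List.nodup_cons] at this
  exact this.1


lemma first_step {s t : V} (W : G.Walk s t) (hst : s ≠ t) :
    ∃ a, G.Adj s a ∧ a ∈ W.support.tail := by
  obtain ⟨a, ha, W', hW⟩ := Walk.exists_eq_cons_of_ne hst W
  exact ⟨a, ha, by rw [hW, support_cons, List.tail_cons]; exact W'.start_mem_support⟩

lemma two_le_vdeg_of_interior [Fintype V] {z c : V} {R : G.Walk r z} (hR : R.IsPath)
    (hc : c ∈ R.support) (hcr : c ≠ r) (hcz : c ≠ z) : 2 ≤ vdeg G c := by
  classical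
  obtain ⟨a, ha, haW⟩ := first_step (R.takeUntil c hc).reverse hcr
  obtain ⟨b, hb, hbW⟩ := first_step (R.dropUntil c hc) hcz
  have haS : a ∈ (R.takeUntil c hc).support := by
    have := List.mem_of_mem_tail haW
    rwa [support_reverse, List.mem_reverse] at this
  have hab : a ≠ b := by
    have hnd := hR.support_nodup
    rw [← R.take_spec hc, support_append, List.nodup_append] at hnd
    exact fun h => hnd.2.2 a haS b hbW h
  have : 1 < vdeg G c := by
    rw [vdeg, Nat.card_coe_set_eq]
    exact (Set.one_lt_ncard_iff (Set.toFinite _)).2 ⟨a, b, ha, hb, hab⟩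
  omega

/-- The meet of two leaves. -/
lemma meet [Fintype V] (hG : G.IsTree)
    (hpos : ∀ e ∈ G.edgeSet, 0 < w e)
    (hd : ∀ u v, ∀ p : G.Walk u v, p.IsPath → d u v = (p.edges.map w).sum)
    (hr : vdeg G r = 1)
    {x y : V} (hx : vdeg G x ≤ 1) (hy : vdeg G y ≤ 1)
    (hxr : x ≠ r) (hyr : y ≠ r) (hxy : x ≠ y)
    {P : G.Walk r x} (hP : P.IsPath) {Q : G.Walk r y} (hQ : Q.IsPath) :
    ∃ u, u ∈ P.support ∧ u ∈ Q.support ∧ 2 ≤ outDeg G r u ∧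
      d r u + d u x = d r x ∧ d r u + d u y = d r y ∧ d x y = d u x + d u y ∧
      ∀ c ∈ P.support, c ∈ Q.support → d r c ≤ d r u := by
  classical
  obtain ⟨u, huF, hmaxF⟩ := Finset.exists_max_image
    (P.support.toFinset ∩ Q.support.toFinset) (fun c => d r c)
    ⟨r, by simp [P.start_mem_support, Q.start_mem_support]⟩
  rw [Finset.mem_inter, List.mem_toFinset, List.mem_toFinset] at huF
  obtain ⟨huP, huQ⟩ := huF
  have hmax : ∀ c, c ∈ P.support → c ∈ Q.support → d r c ≤ d r u := by
    intro c h1 h2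
    exact hmaxF c (by simp [h1, h2])
  have e₁ : d r x = d r u + d u x := d_split hd hP huP
  have e₂ : d r y = d r u + d u y := d_split hd hQ huQ
  set dp := P.dropUntil u huP with hdp
  set dq := Q.dropUntil u huQ with hdq
  have hdpp : dp.IsPath := hP.dropUntil huP
  have hdqp : dq.IsPath := hQ.dropUntil huQ
  have hcommon : ∀ c, c ∈ dp.support → c ∈ dq.support → c = u := by
    intro c h1 h2
    by_contra hne
    have hc1 : d r c = d r u + d u c := depth_after hG hd hP huP h1
    have hle : d r c ≤ d r u :=
      hmax c (P.support_dropUntil_subset huP h1) (Q.support_dropUntil_subset huQ h2)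
    have : d u c = 0 := by
      rw [hc1] at hle
      have := (add_le_iff_nonpos_right (a := d r u)).1 hle
      simpa using this
    exact hne ((d_eq_zero_iff hG hpos hd u c).1 this).symm
  -- the path from x to y through u
  have htp : (dp.reverse.append dq).IsPath := by
    rw [isPath_def, support_append, support_reverse, List.nodup_append]
    refine ⟨(List.nodup_reverse).2 hdpp.support_nodup, tail_nodup_of_isPath hdqp, ?_⟩
    intro c hc1 c' hc2 hcc'
    rw [← hcc'] at hc2
    rw [List.mem_reverse] at hc1
    have hc2' : c ∈ dq.support := by
      rw [dq.support_eq_cons]; exact List.mem_cons_of_mem _ hc2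
    have := hcommon c hc1 hc2'
    subst this
    exact (start_not_mem_tail_support hdqp) hc2
  have e₃ : d x y = d u x + d u y := by
    rw [hd x y _ htp, edges_append, edges_reverse, List.map_append, List.sum_append,
      List.map_reverse, List.sum_reverse, ← hd u x dp hdpp, ← hd u y dq hdqp]
  -- u is not the root
  have hur : u ≠ r := by
    intro heq
    obtain ⟨a, ha, P', hPeq⟩ := Walk.exists_eq_cons_of_ne (Ne.symm hxr) P
    obtain ⟨b, hb, Q', hQeq⟩ := Walk.exists_eq_cons_of_ne (Ne.symm hyr) Q
    have hab : a = b := adj_eq_of_vdeg_le_one (le_of_eq hr) ha hb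
    subst hab
    have haP : a ∈ P.support := by rw [hPeq]; simp
    have haQ : a ∈ Q.support := by rw [hQeq]; simp
    have h0 : d r a ≤ d r u := hmax a haP haQ
    rw [heq, d_self hd] at h0
    have h0' : d r a = 0 := le_antisymm h0 zero_le
    exact ha.ne ((d_eq_zero_iff hG hpos hd r a).1 h0')
  -- u is not x or y
  have hux : u ≠ x := by
    rintro rfl
    exact absurd hx (by have := two_le_vdeg_of_interior hQ huQ hur hxy; omega)
  have huy : u ≠ y := by
    rintro rfl
    exact absurd hy (by have := two_le_vdeg_of_interior hP huP hur (Ne.symm hxy); omega)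
  -- three distinct neighbors of u
  obtain ⟨b, hb, hbW⟩ := first_step (P.takeUntil u huP).reverse hur
  have hbS : b ∈ (P.takeUntil u huP).support := by
    have := List.mem_of_mem_tail hbW
    rwa [support_reverse, List.mem_reverse] at this
  have hbu : b ≠ u := by
    rintro rfl
    exact start_not_mem_tail_support (hP.takeUntil huP).reverse hbW
  obtain ⟨a₁, ha₁, h1W⟩ := first_step dp hux
  obtain ⟨a₂, ha₂, h2W⟩ := first_step dq huy
  have hba₁ : b ≠ a₁ := by
    have hnd := hP.support_nodup
    rw [← P.take_spec huP, support_append, List.nodup_append] at hnd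
    exact fun h => hnd.2.2 b hbS a₁ h1W h
  have hba₂ : b ≠ a₂ := by
    rintro rfl
    have e_b : d r u = d r b + d b u := d_split hd (hP.takeUntil huP) hbS
    have e_a : d r b = d r u + d u b :=
      depth_after hG hd hQ huQ (List.mem_of_mem_tail h2W)
    rw [e_a] at e_b
    have hz : d u b + d b u = 0 := by rwa [add_assoc, left_eq_add] at e_b
    have hz2 : d u b = 0 := (add_eq_zero.1 hz).1
    exact ha₂.ne' ((d_eq_zero_iff hG hpos hd u b).1 hz2).symm
  have h12 : a₁ ≠ a₂ := by
    intro h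
    exact ha₁.ne'
      (hcommon a₁ (List.mem_of_mem_tail h1W) (h ▸ List.mem_of_mem_tail h2W))
  have hdeg : 3 ≤ vdeg G u := three_le_vdeg hb ha₁ ha₂ hba₁ hba₂ h12
  have houtdeg : 2 ≤ outDeg G r u := by
    unfold outDeg
    rw [if_neg hur]
    omega
  exact ⟨u, huP, huQ, houtdeg, e₁.symm, e₂.symm, e₃, hmax⟩


lemma concat_path {u c a : V} {p : G.Walk u c} (hp : p.IsPath) (h : G.Adj c a)
    (hans : a ∉ p.support) : (p.concat h).IsPath := by
  rw [isPath_def, support_concat, List.nodup_append]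
  exact ⟨hp.support_nodup, List.nodup_singleton a, by intro x hx b hb hxb; simp at hb; subst hb; subst hxb; exact hans hx⟩

/-- From a vertex of degree ≥ 3, two leaves branching there. -/
lemma branch [Fintype V] (hG : G.IsTree)
    (hpos : ∀ e ∈ G.edgeSet, 0 < w e)
    (hd : ∀ u v, ∀ p : G.Walk u v, p.IsPath → d u v = (p.edges.map w).sum)
    {v : V} (hvr : v ≠ r) (hv3 : 3 ≤ vdeg G v) :
    ∃ x y, vdeg G x ≤ 1 ∧ vdeg G y ≤ 1 ∧ x ≠ r ∧ y ≠ r ∧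
      d r v + d v x = d r x ∧ d r v + d v y = d r y ∧ d x y = d v x + d v y := by
  classical
  obtain ⟨p, hp⟩ := exists_path hG r v
  obtain ⟨b, hb, hbW⟩ := first_step p.reverse hvr
  have hbS : b ∈ p.support := by
    have := List.mem_of_mem_tail hbW
    rwa [support_reverse, List.mem_reverse] at this
  have hcard : 1 < (G.neighborSet v \ {b}).ncard := by
    have hbmem : b ∈ G.neighborSet v := hb
    have h1 := Set.ncard_diff_singleton_of_mem hbmem
    rw [vdeg, Nat.card_coe_set_eq] at hv3
    omega
  obtain ⟨a₁, a₂, h1m, h2m, h12⟩ := (Set.one_lt_ncard_iff (Set.toFinite _)).1 hcard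
  have ha₁ : G.Adj v a₁ := h1m.1
  have ha₂ : G.Adj v a₂ := h2m.1
  have hb₁ : a₁ ≠ b := by simpa using h1m.2
  have hb₂ : a₂ ≠ b := by simpa using h2m.2
  have hnot : ∀ a, G.Adj v a → a ≠ b → a ∉ p.support := fun a ha hab hmem =>
    hab (uniq_prev hG hp hmem hbS ha.symm hb.symm)
  have hcp₁ : (p.concat ha₁).IsPath := concat_path hp ha₁ (hnot a₁ ha₁ hb₁)
  have hcp₂ : (p.concat ha₂).IsPath := concat_path hp ha₂ (hnot a₂ ha₂ hb₂)
  obtain ⟨x, q₁, hq₁, hxleaf⟩ := descend hG (Fintype.card V) a₁ (p.concat ha₁) hcp₁ (by omega)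
  obtain ⟨y, q₂, hq₂, hyleaf⟩ := descend hG (Fintype.card V) a₂ (p.concat ha₂) hcp₂ (by omega)
  rw [concat_eq_append] at hq₁ hq₂
  have hassoc : ∀ (a' : V) (ha' : G.Adj v a') {z : V} (q : G.Walk a' z),
      (p.append (Walk.cons ha' Walk.nil)).append q = p.append (Walk.cons ha' q) := by
    intro a' ha' z q
    rw [← Walk.append_assoc]; simp
  rw [hassoc a₁ ha₁ q₁] at hq₁
  rw [hassoc a₂ ha₂ q₂] at hq₂
  set s₁ := Walk.cons ha₁ q₁ with hs₁def
  set s₂ := Walk.cons ha₂ q₂ with hs₂def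
  have hs₁p : s₁.IsPath := hq₁.of_append_right
  have hs₂p : s₂.IsPath := hq₂.of_append_right
  have hq₁p : q₁.IsPath ∧ v ∉ q₁.support := (cons_isPath_iff ha₁ q₁).1 hs₁p
  have hq₂p : q₂.IsPath ∧ v ∉ q₂.support := (cons_isPath_iff ha₂ q₂).1 hs₂p
  have hcommon : ∀ c, c ∈ s₁.support → c ∈ s₂.support → c = v := by
    intro c h1 h2
    by_contra hne
    have h1' : c ∈ q₁.support := by
      rw [hs₁def, support_cons] at h1
      exact (List.mem_cons.1 h1).resolve_left hne
    have h2' : c ∈ q₂.support := by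
      rw [hs₂def, support_cons] at h2
      exact (List.mem_cons.1 h2).resolve_left hne
    have ht₁ : (Walk.cons ha₁ (q₁.takeUntil c h1')).IsPath :=
      IsPath.cons (hq₁p.1.takeUntil h1')
        (fun hmem => hq₁p.2 (q₁.support_takeUntil_subset h1' hmem))
    have ht₂ : (Walk.cons ha₂ (q₂.takeUntil c h2')).IsPath :=
      IsPath.cons (hq₂p.1.takeUntil h2')
        (fun hmem => hq₂p.2 (q₂.support_takeUntil_subset h2' hmem))
    have hEq := path_unique hG ht₁ ht₂
    have hsup := congrArg Walk.support hEq
    rw [support_cons, support_cons, (q₁.takeUntil c h1').support_eq_cons,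
      (q₂.takeUntil c h2').support_eq_cons] at hsup
    simp only [List.cons.injEq] at hsup
    exact h12 hsup.2.1
  have htp : (s₁.reverse.append s₂).IsPath := by
    rw [isPath_def, support_append, support_reverse, List.nodup_append]
    refine ⟨List.nodup_reverse.2 hs₁p.support_nodup, tail_nodup_of_isPath hs₂p, ?_⟩
    intro c hc1 c' hc2 hcc'
    rw [← hcc'] at hc2
    rw [List.mem_reverse] at hc1
    have hc2' : c ∈ s₂.support := by
      rw [s₂.support_eq_cons]; exact List.mem_cons_of_mem _ hc2
    have := hcommon c hc1 hc2'
    subst this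
    exact start_not_mem_tail_support hs₂p hc2
  have exy : d x y = d v x + d v y := by
    rw [hd x y _ htp, edges_append, edges_reverse, List.map_append, List.sum_append,
      List.map_reverse, List.sum_reverse, ← hd v x s₁ hs₁p, ← hd v y s₂ hs₂p]
  have hvmem₁ : v ∈ (p.append s₁).support := by
    rw [mem_support_append_iff]; exact Or.inl p.end_mem_support
  have hvmem₂ : v ∈ (p.append s₂).support := by
    rw [mem_support_append_iff]; exact Or.inl p.end_mem_support
  have ex : d r v + d v x = d r x := (d_split hd hq₁ hvmem₁).symm
  have ey : d r v + d v y = d r y := (d_split hd hq₂ hvmem₂).symm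
  have hxr : x ≠ r := by
    intro h; subst h
    have hnil := (isPath_iff_eq_nil).1 hq₁
    rw [hnil] at hvmem₁
    simp at hvmem₁
    exact hvr hvmem₁
  have hyr : y ≠ r := by
    intro h; subst h
    have hnil := (isPath_iff_eq_nil).1 hq₂
    rw [hnil] at hvmem₂
    simp at hvmem₂
    exact hvr hvmem₂
  exact ⟨x, y, hxleaf, hyleaf, hxr, hyr, ex, ey, exy⟩


lemma key_alg {A B C D E F' : NNReal} (h1 : A + B = D) (h2 : A + C = E)
    (h3 : F' = B + C) : F' + (A + A) = D + E := by
  rw [h3, ← h1, ← h2]; ring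

end Stmt17Aux

open Stmt17Aux

/-- Let `T(r, w)` be planted and equidistant with
`V₂⁺⁺(T) = {v : δ⁺(v) ≥ 2}` nonempty, and `L` the set of leaves of `T`. Then `d_w`
restricted to `L` is an ultrametric iff
`2 · dist(r, V₂⁺⁺(T)) ≥ dist(r, V₀⁺(T))`. -/
theorem stmt17_ultrametric_on_leaves_iff_dist_ineq
    {V : Type*} [Fintype V] (G : SimpleGraph V) (hG : G.IsTree) (r : V)
    (hplanted : outDeg G r r = 1)
    (w : Sym2 V → NNReal) (hw : EquidistantWeight G r w)
    (hV2 : {v : V | 2 ≤ outDeg G r v}.Nonempty)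
    (d : V → V → NNReal)
    (hd : ∀ u v, ∀ p : G.Walk u v, p.IsPath → d u v = (p.edges.map w).sum) :
    IsUltrametricOn d {v | vdeg G v ≤ 1} ↔
      sInf {x : NNReal | ∃ a, outDeg G r a = 0 ∧ x = d r a} ≤
        2 * sInf {x : NNReal | ∃ a, 2 ≤ outDeg G r a ∧ x = d r a} := by

  classical
  obtain ⟨hpos, K, hK⟩ := hw
  have hrdeg : vdeg G r = 1 := by unfold outDeg at hplanted; rwa [if_pos rfl] at hplanted
  have houtzero : ∀ x, vdeg G x ≤ 1 → x ≠ r → outDeg G r x = 0 := by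
    intro x hx hxr; unfold outDeg; rw [if_neg hxr]; omega
  have hdrK : ∀ x, vdeg G x ≤ 1 → x ≠ r → d r x = K := by
    intro x hx hxr
    obtain ⟨p, hp⟩ := exists_path hG r x
    rw [hd r x p hp]
    exact hK x (houtzero x hx hxr) p hp
  -- a leaf different from the root
  obtain ⟨v₀, hv₀⟩ := hV2
  have hv₀2 : 2 ≤ outDeg G r v₀ := hv₀
  have hv₀r : v₀ ≠ r := by
    intro h; rw [h, hplanted] at hv₀2; omega
  obtain ⟨pv₀, hpv₀⟩ := exists_path hG r v₀
  obtain ⟨x₀, q₀, hq₀, hx₀leaf⟩ := descend hG (Fintype.card V) v₀ pv₀ hpv₀ (by omega)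
  have hv₀mem : v₀ ∈ (pv₀.append q₀).support := by
    rw [Walk.mem_support_append_iff]; exact Or.inl pv₀.end_mem_support
  have hx₀r : x₀ ≠ r := by
    intro h; subst h
    have hnil := (Walk.isPath_iff_eq_nil).1 hq₀
    rw [hnil] at hv₀mem
    simp at hv₀mem
    exact hv₀r hv₀mem
  have hset1 : {x : NNReal | ∃ a, outDeg G r a = 0 ∧ x = d r a} = {K} := by
    ext t
    simp only [Set.mem_setOf_eq, Set.mem_singleton_iff]
    constructor
    · rintro ⟨a, ha0, rfl⟩
      have har : a ≠ r := by
        intro h; rw [h, hplanted] at ha0; omega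
      have haleaf : vdeg G a ≤ 1 := by
        unfold outDeg at ha0; rw [if_neg har] at ha0; omega
      exact hdrK a haleaf har
    · rintro rfl
      exact ⟨x₀, houtzero x₀ hx₀leaf hx₀r, (hdrK x₀ hx₀leaf hx₀r).symm⟩
  rw [hset1, csInf_singleton]
  set S := {x : NNReal | ∃ a, 2 ≤ outDeg G r a ∧ x = d r a} with hSdef
  have hSne : S.Nonempty := ⟨d r v₀, v₀, hv₀2, rfl⟩
  have hSfin : S.Finite := by
    have hsub : S ⊆ (fun a => d r a) '' Set.univ := by
      rintro t ⟨a, -, rfl⟩; exact ⟨a, trivial, rfl⟩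
    exact (Set.finite_univ.image _).subset hsub
  have hm_le : ∀ a, 2 ≤ outDeg G r a → sInf S ≤ d r a := fun a ha =>
    csInf_le (OrderBot.bddBelow _) ⟨a, ha, rfl⟩
  constructor
  · -- ultrametric → inequality
    intro hult
    obtain ⟨v, hv2, hveq⟩ := hSne.csInf_mem hSfin
    have hvr : v ≠ r := by
      intro h; rw [h, hplanted] at hv2; omega
    have hv3 : 3 ≤ vdeg G v := by
      unfold outDeg at hv2; rw [if_neg hvr] at hv2; omega
    obtain ⟨x, y, hxl, hyl, hxr, hyr, ex, ey, exy⟩ := branch hG hpos hd hvr hv3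
    have hdx : d r x = K := hdrK x hxl hxr
    have hdy : d r y = K := hdrK y hyl hyr
    have hub := hult.2 x (by exact hxl) y (by exact hyl) r (by simpa using hrdeg.le)
    rw [d_symm hG hd x r, hdx, hdy, max_self] at hub
    have hsum : d x y + (d r v + d r v) = K + K := by
      have := key_alg ex ey exy
      rwa [hdx, hdy] at this
    have hKle : K ≤ d r v + d r v := by
      have h2 : K + K ≤ K + (d r v + d r v) := by
        calc K + K = d x y + (d r v + d r v) := hsum.symm
        _ ≤ K + (d r v + d r v) := add_le_add_left hub _
      exact le_of_add_le_add_left h2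
    rw [hveq, two_mul]
    exact hKle
  · -- inequality → ultrametric
    intro hKm
    rw [two_mul] at hKm
    -- the strong triangle inequality
    have strong : ∀ x ∈ {v : V | vdeg G v ≤ 1}, ∀ y ∈ {v : V | vdeg G v ≤ 1},
        ∀ z ∈ {v : V | vdeg G v ≤ 1}, d x y ≤ max (d x z) (d z y) := by
      intro x hx y hy z hz
      simp only [Set.mem_setOf_eq] at hx hy hz
      by_cases hxy : x = y
      · subst hxy; rw [d_self hd]; exact zero_le
      by_cases hzx : z = x
      · subst hzx; exact le_max_right _ _
      by_cases hzy : z = y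
      · subst hzy; exact le_max_left _ _
      -- bound lemma : d of two distinct non-root leaves is ≤ K
      have BND : ∀ a b : V, vdeg G a ≤ 1 → vdeg G b ≤ 1 → a ≠ b → a ≠ r → b ≠ r →
          d a b ≤ K := by
        intro a b hal hbl hab har hbr
        obtain ⟨pa, hpa⟩ := exists_path hG r a
        obtain ⟨pb, hpb⟩ := exists_path hG r b
        obtain ⟨u, -, -, hu2, eua, eub, eab, -⟩ :=
          meet hG hpos hd hrdeg hal hbl har hbr hab hpa hpb
        rw [hdrK a hal har] at eua
        rw [hdrK b hbl hbr] at eub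
        have h2K : d a b + (d r u + d r u) = K + K := key_alg eua eub eab
        have hKu : K ≤ d r u + d r u := by
          calc K ≤ sInf S + sInf S := hKm
          _ ≤ d r u + d r u := add_le_add (hm_le u hu2) (hm_le u hu2)
        have : d a b + K ≤ K + K := by
          calc d a b + K ≤ d a b + (d r u + d r u) := add_le_add_right hKu _
          _ = K + K := h2K
        exact le_of_add_le_add_right this
      by_cases hxr : x = r
      · rw [hxr, hdrK y hy (fun h => hxy (hxr.trans h.symm)),
          hdrK z hz (fun h => hzx (h.trans hxr.symm))]
        exact le_max_left _ _
      by_cases hyr : y = r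
      · rw [hyr, d_symm hG hd x r, d_symm hG hd z r, hdrK x hx hxr,
          hdrK z hz (fun h => hzy (h.trans hyr.symm))]
        exact le_max_right _ _
      by_cases hzr : z = r
      · rw [hzr, d_symm hG hd x r, hdrK x hx hxr, hdrK y hy hyr, max_self]
        exact BND x y hx hy hxy hxr hyr
      -- main case: x, y, z pairwise distinct and different from r
      obtain ⟨P, hP⟩ := exists_path hG r x
      obtain ⟨Q, hQ⟩ := exists_path hG r y
      obtain ⟨R, hR⟩ := exists_path hG r z
      obtain ⟨u₁, hu₁P, hu₁Q, hu₁2, e1x, e1y, e1, max₁⟩ :=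
        meet hG hpos hd hrdeg hx hy hxr hyr hxy hP hQ
      obtain ⟨u₂, hu₂P, hu₂R, hu₂2, e2x, e2z, e2, -⟩ :=
        meet hG hpos hd hrdeg hx hz hxr hzr (fun h => hzx h.symm) hP hR
      obtain ⟨u₃, hu₃R, hu₃Q, hu₃2, e3z, e3y, e3, -⟩ :=
        meet hG hpos hd hrdeg hz hy hzr hyr hzy hR hQ
      have core : ∀ (a b : V), a ∈ R.support → b ∈ R.support →
          ∀ {t : V} (W : G.Walk r t), W.IsPath → b ∈ W.support → d r a ≤ d r b →
          a ∈ W.support := by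
        intro a b haR hbR t W hW hbW hab
        have htri : a ∈ (R.takeUntil b hbR).support ∨ a ∈ (R.dropUntil b hbR).support := by
          have := haR
          rw [← R.take_spec hbR, Walk.mem_support_append_iff] at this
          exact this
        rcases htri with h | h
        · have hTake : R.takeUntil b hbR = W.takeUntil b hbW :=
            path_unique hG (hR.takeUntil hbR) (hW.takeUntil hbW)
          rw [hTake] at h
          exact W.support_takeUntil_subset hbW h
        · have hdep : d r a = d r b + d b a := depth_after hG hd hR hbR h
          have hba0 : d b a = 0 := by
            rw [hdep] at hab
            have := (add_le_iff_nonpos_right (a := d r b)).1 hab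
            simpa using this
          have hba : b = a := (d_eq_zero_iff hG hpos hd b a).1 hba0
          rw [← hba]
          exact hbW
      have hKx : d r x = K := hdrK x hx hxr
      have hKy : d r y = K := hdrK y hy hyr
      have hKz : d r z = K := hdrK z hz hzr
      rcases le_total (d r u₂) (d r u₃) with hle | hle
      · have h21 : d r u₂ ≤ d r u₁ :=
          max₁ u₂ hu₂P (core u₂ u₃ hu₂R hu₃R Q hQ hu₃Q hle)
        have hA : d x y + (d r u₁ + d r u₁) = K + K := by
          have := key_alg e1x e1y e1; rwa [hKx, hKy] at this
        have hB : d x z + (d r u₂ + d r u₂) = K + K := by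
          have := key_alg e2x e2z e2; rwa [hKx, hKz] at this
        have hfin : d x y ≤ d x z := by
          have h1 : d x y + (d r u₂ + d r u₂) ≤ d x z + (d r u₂ + d r u₂) := by
            calc d x y + (d r u₂ + d r u₂) ≤ d x y + (d r u₁ + d r u₁) :=
                  add_le_add_right (add_le_add h21 h21) _
            _ = K + K := hA
            _ = d x z + (d r u₂ + d r u₂) := hB.symm
          exact le_of_add_le_add_right h1
        exact hfin.trans (le_max_left _ _)
      · have h31 : d r u₃ ≤ d r u₁ :=
          max₁ u₃ (core u₃ u₂ hu₃R hu₂R P hP hu₂P hle) hu₃Q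
        have hA : d x y + (d r u₁ + d r u₁) = K + K := by
          have := key_alg e1x e1y e1; rwa [hKx, hKy] at this
        have hB : d z y + (d r u₃ + d r u₃) = K + K := by
          have := key_alg e3z e3y e3; rwa [hKz, hKy] at this
        have hfin : d x y ≤ d z y := by
          have h1 : d x y + (d r u₃ + d r u₃) ≤ d z y + (d r u₃ + d r u₃) := by
            calc d x y + (d r u₃ + d r u₃) ≤ d x y + (d r u₁ + d r u₁) :=
                  add_le_add_right (add_le_add h31 h31) _
            _ = K + K := hA
            _ = d z y + (d r u₃ + d r u₃) := hB.symm
          exact le_of_add_le_add_right h1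
        exact hfin.trans (le_max_right _ _)
    exact ⟨⟨fun x _ y _ => d_eq_zero_iff hG hpos hd x y,
      fun x _ y _ => d_symm hG hd x y,
      fun x hx y hy z hz => (strong x hx y hy z hz).trans
        (max_le le_self_add le_add_self)⟩, strong⟩
end
end

section
/- Let T be a nonempty tree. Then the following are equivalent: (1) T is a star; (2) there is a strictly positive weight w : E(T) → ℝ≥0 such that the weighted rooted tree T(r,w) is equidistant for every choice of root r ∈ V(T). -/
open SimpleGraph

noncomputable section

variable {V : Type*}

namespace Stmt18Aux

open SimpleGraph Walk

variable {G : SimpleGraph V}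

lemma outDeg_self {r : V} : outDeg G r r = vdeg G r := if_pos rfl

lemma outDeg_ne {r x : V} (h : x ≠ r) : outDeg G r x = vdeg G x - 1 := if_neg h

lemma nbr_unique {x z1 z2 : V} (h : vdeg G x = 1) (h1 : G.Adj x z1) (h2 : G.Adj x z2) :
    z1 = z2 := by
  obtain ⟨y, hy⟩ := Nat.card_eq_one_iff_exists.mp h
  have e1 := hy ⟨z1, h1⟩
  have e2 := hy ⟨z2, h2⟩
  exact congrArg Subtype.val (e1.trans e2.symm)

lemma vdeg_pos [Fintype V] {x z : V} (h : G.Adj x z) : 0 < vdeg G x := by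
  have : Nonempty (G.neighborSet x) := ⟨⟨z, h⟩⟩
  exact Nat.card_pos

lemma vdeg_singleton {x z : V} (h : G.neighborSet x = {z}) : vdeg G x = 1 := by
  rw [vdeg, h]
  exact Nat.card_eq_one_iff_exists.mpr ⟨⟨z, rfl⟩, fun y => Subtype.ext y.2⟩

lemma exists_leaf_path [Fintype V] (hG : G.IsAcyclic) {v u : V} (hvu : G.Adj v u) :
    ∃ (x : V) (p : G.Walk u x), p.IsPath ∧ v ∉ p.support ∧ vdeg G x = 1 := by
  classical
  have huniq : ∀ ⦃a b : V⦄ (p q : G.Path a b), p = q := isAcyclic_iff_path_unique.mp hG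
  set S : Set ℕ := {n | ∃ (x : V) (p : G.Walk u x), p.IsPath ∧ v ∉ p.support ∧ p.length = n}
    with hSdef
  have h0 : 0 ∈ S := ⟨u, Walk.nil, by simp, by simp [hvu.ne], rfl⟩
  have hbdd : BddAbove S := ⟨Fintype.card V, by rintro n ⟨x, p, hp, -, rfl⟩; exact hp.length_lt.le⟩
  obtain ⟨x, p, hp, hv, hlen⟩ := Nat.sSup_mem ⟨0, h0⟩ hbdd
  have hmax : ∀ (y : V) (q : G.Walk u y), q.IsPath → v ∉ q.support → q.length ≤ p.length := by
    intro y q hq hvq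
    rw [hlen]; exact le_csSup hbdd ⟨y, q, hq, hvq, rfl⟩
  have hext : ∀ z, G.Adj x z → z ≠ v → z ∈ p.support := by
    intro z hz hzv
    by_contra hzs
    have hconc : (p.concat hz).IsPath := by
      rw [← isPath_reverse_iff, reverse_concat, cons_isPath_iff]
      refine ⟨hp.reverse, ?_⟩
      rw [support_reverse, List.mem_reverse]
      exact hzs
    have hvconc : v ∉ (p.concat hz).support := by
      rw [support_concat]
      simp only [List.concat_eq_append, List.mem_append, List.mem_singleton]
      rintro (h | h)
      · exact hv h
      · exact hzv h.symm
    have := hmax z (p.concat hz) hconc hvconc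
    rw [length_concat] at this
    omega
  have hedge_len : ∀ (z : V) (hz : z ∈ p.reverse.support) (hxz : G.Adj x z),
      (p.reverse.takeUntil z hz).length = 1 := by
    intro z hz hxz
    have ht : (p.reverse.takeUntil z hz).IsPath := hp.reverse.takeUntil hz
    have he : (Walk.cons hxz Walk.nil).IsPath := by
      simp [Walk.cons_isPath_iff, hxz.ne]
    have heq := huniq ⟨p.reverse.takeUntil z hz, ht⟩ ⟨Walk.cons hxz Walk.nil, he⟩
    have := congrArg (fun q : G.Path x z => q.1.length) heq
    simpa using this
  refine ⟨x, p, hp, hv, ?_⟩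
  cases p with
  | nil =>
    have hNu : G.neighborSet u = {v} := by
      ext z
      simp only [mem_neighborSet, Set.mem_singleton_iff]
      constructor
      · intro hz
        by_contra hzv
        have hmem := hext z hz hzv
        simp only [support_nil, List.mem_singleton] at hmem
        exact G.irrefl (hmem ▸ hz)
      · rintro rfl; exact hvu.symm
    exact vdeg_singleton hNu
  | cons h₀ p₀ =>
    set pr := (Walk.cons h₀ p₀).reverse with hpr
    have hprlen : 1 ≤ pr.length := by simp [hpr]
    have hpred_adj : G.Adj x (pr.getVert 1) := by
      have := pr.adj_getVert_succ (i := 0) (by omega)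
      simpa [getVert_zero] using this
    have hNx : G.neighborSet x = {pr.getVert 1} := by
      ext z
      simp only [mem_neighborSet, Set.mem_singleton_iff]
      constructor
      · intro hz
        by_cases hzv : z = v
        · subst hzv
          exfalso
          have hconc : ((Walk.cons h₀ p₀).concat hz).IsPath := by
            rw [← isPath_reverse_iff, reverse_concat, cons_isPath_iff]
            refine ⟨hp.reverse, ?_⟩
            rw [support_reverse, List.mem_reverse]
            exact hv
          have hone : (Walk.cons hvu Walk.nil).IsPath := by
            simp [Walk.cons_isPath_iff, hvu.ne]
          have heq := huniq ⟨((Walk.cons h₀ p₀).concat hz).reverse, hconc.reverse⟩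
            ⟨Walk.cons hvu Walk.nil, hone⟩
          have hl := congrArg (fun q : G.Path z u => q.1.length) heq
          simp [length_reverse, length_concat] at hl
        · have hzs : z ∈ (Walk.cons h₀ p₀).support := hext z hz hzv
          have hzs' : z ∈ pr.support := by
            rw [hpr, support_reverse, List.mem_reverse]; exact hzs
          have hlen1 := hedge_len z hzs' hz
          have hz1 : pr.getVert 1 = z := by
            conv_lhs => rw [← pr.take_spec hzs']
            rw [getVert_append, hlen1]
            simp
          exact hz1.symm
      · rintro rfl; exact hpred_adj
    exact vdeg_singleton hNx

lemma star_of_key [Fintype V] (hconn : G.Connected)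
    (hkey : ∀ u v, G.Adj u v → vdeg G u = 1 ∨ vdeg G v = 1) {c d : V}
    (hcd : G.Adj c d) (hd1 : vdeg G d = 1) :
    (∀ x, x ≠ c → G.Adj c x) ∧ ∀ u v, G.Adj u v → u = c ∨ v = c := by
  classical
  have hC1 : ∀ x, x ≠ c → G.Adj c x := by
    intro x hx
    obtain ⟨p0⟩ := hconn.preconnected c x
    obtain ⟨p, hp⟩ := p0.toPath
    cases p with
    | nil => exact absurd rfl hx
    | @cons _ b₁ _ h₁ rest =>
      cases rest with
      | nil => exact h₁
      | @cons _ b₂ _ h₂ rest₂ =>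
        exfalso
        rw [Walk.cons_isPath_iff] at hp
        obtain ⟨-, hcsup⟩ := hp
        have hcb2 : c ≠ b₂ := by
          intro h
          apply hcsup
          rw [Walk.support_cons]
          exact List.mem_cons_of_mem _ (h ▸ rest₂.start_mem_support)
        have hvb1 : vdeg G b₁ ≠ 1 := fun h1 => hcb2 (nbr_unique h1 h₁.symm h₂)
        have hvc : vdeg G c = 1 := (hkey c b₁ h₁).resolve_right hvb1
        have hdb1 : d = b₁ := nbr_unique hvc hcd h₁
        exact hvb1 (hdb1 ▸ hd1)
  refine ⟨hC1, fun u v huv => ?_⟩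
  by_contra hcon
  push_neg at hcon
  obtain ⟨huc, hvc⟩ := hcon
  have h1 : G.Adj c u := hC1 u huc
  have h2 : G.Adj c v := hC1 v hvc
  have hu_ne1 : vdeg G u ≠ 1 := fun h => hvc (nbr_unique h huv h1.symm)
  have hv_ne1 : vdeg G v ≠ 1 := fun h => huc (nbr_unique h huv.symm h2.symm)
  exact (hkey u v huv).elim hu_ne1 hv_ne1

end Stmt18Aux

open Stmt18Aux in
/-- A nonempty tree `T` is a star if and only if there is a strictly
positive weight `w` on `E(T)` such that `T(r, w)` is equidistant for every choice of
the root `r ∈ V(T)`. -/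
theorem stmt18_star_iff_equidistant_for_every_root
    {V : Type*} [Fintype V] (G : SimpleGraph V) (hG : G.IsTree)
    (hE : G.edgeSet.Nonempty) :
    (∃ c : V, (∀ v, v ≠ c → G.Adj c v) ∧ ∀ u v, G.Adj u v → u = c ∨ v = c) ↔
      (∃ w : Sym2 V → NNReal, (∀ e ∈ G.edgeSet, 0 < w e) ∧
        ∀ r : V, EquidistantWeight G r w) := by
  classical
  have hadj : ∃ a b, G.Adj a b := by
    obtain ⟨e, he⟩ := hE
    induction e using Sym2.ind with
    | _ x y => exact ⟨x, y, G.mem_edgeSet.mp he⟩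
  constructor
  · rintro ⟨c, hc1, hc2⟩
    have hleaf : ∀ x, x ≠ c → vdeg G x = 1 := by
      intro x hx
      apply vdeg_singleton (z := c)
      ext z
      simp only [mem_neighborSet, Set.mem_singleton_iff]
      constructor
      · intro hz
        rcases hc2 x z hz with h | h
        · exact absurd h hx
        · exact h
      · rintro rfl
        exact (hc1 x hx).symm
    have hcd : ∃ d, G.Adj c d := by
      obtain ⟨a, b, hab⟩ := hadj
      rcases hc2 a b hab with rfl | rfl
      · exact ⟨b, hab⟩
      · exact ⟨a, hab.symm⟩
    obtain ⟨d, hcd⟩ := hcd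
    have hvc_pos : 0 < vdeg G c := vdeg_pos hcd
    refine ⟨fun _ => 1, fun e _ => one_pos, fun r => ⟨fun e _ => one_pos, ?_⟩⟩
    by_cases hrc : r = c
    · subst hrc
      refine ⟨1, fun u h0 p hp => ?_⟩
      have huc : u ≠ r := by
        rintro rfl
        rw [outDeg_self] at h0
        omega
      have hq : (Walk.cons (hc1 u huc) Walk.nil).IsPath := by
        simp [Walk.cons_isPath_iff, (hc1 u huc).ne]
      have hpq := (hG.existsUnique_path r u).unique hp hq
      rw [hpq]
      simp
    · have hcr : G.Adj c r := hc1 r hrc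
      have hr1 : vdeg G r = 1 := hleaf r hrc
      by_cases hvc1 : vdeg G c = 1
      · refine ⟨1, fun u h0 p hp => ?_⟩
        have hur : u ≠ r := by
          rintro rfl
          rw [outDeg_self] at h0
          omega
        have huc : u = c := by
          by_contra h
          have h1 : G.Adj c u := hc1 u h
          exact hur (nbr_unique hvc1 h1 hcr)
        subst huc
        have hq : (Walk.cons hcr.symm Walk.nil).IsPath := by
          simp [Walk.cons_isPath_iff, hcr.ne']
        have hpq := (hG.existsUnique_path r u).unique hp hq
        rw [hpq]
        simp
      · refine ⟨2, fun u h0 p hp => ?_⟩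
        have hur : u ≠ r := by
          rintro rfl
          rw [outDeg_self] at h0
          omega
        have huc : u ≠ c := by
          intro h
          rw [outDeg_ne hur, h] at h0
          omega
        have hcu : G.Adj c u := hc1 u huc
        have hq : (Walk.cons hcr.symm (Walk.cons hcu Walk.nil)).IsPath := by
          simp [Walk.cons_isPath_iff, Walk.support_cons, hrc, Ne.symm hur, hcu.ne]
        have hpq := (hG.existsUnique_path r u).unique hp hq
        rw [hpq]
        simp
        norm_num
  · rintro ⟨w, hwpos, hall⟩
    have hkey : ∀ u v : V, G.Adj u v → vdeg G u = 1 ∨ vdeg G v = 1 := by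
      intro u v huv
      by_contra hcon
      push_neg at hcon
      obtain ⟨hu1, hv1⟩ := hcon
      obtain ⟨x, p, hp, hvp, hx⟩ := exists_leaf_path hG.IsAcyclic huv.symm
      obtain ⟨y, q, hq, huq, hy⟩ := exists_leaf_path hG.IsAcyclic huv
      have hxu : x ≠ u := fun h => hu1 (h ▸ hx)
      have hyv : y ≠ v := fun h => hv1 (h ▸ hy)
      have hyu : y ≠ u := fun h => huq (h ▸ q.end_mem_support)
      have hxv : x ≠ v := fun h => hvp (h ▸ p.end_mem_support)
      obtain ⟨-, K, hK⟩ := hall u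
      obtain ⟨-, K', hK'⟩ := hall v
      have hodx_u : outDeg G u x = 0 := by rw [outDeg_ne hxu, hx]
      have hody_u : outDeg G u y = 0 := by rw [outDeg_ne hyu, hy]
      have hody_v : outDeg G v y = 0 := by rw [outDeg_ne hyv, hy]
      have hodx_v : outDeg G v x = 0 := by rw [outDeg_ne hxv, hx]
      have e1 : (p.edges.map w).sum = K := hK x hodx_u p hp
      have huy_path : (Walk.cons huv q).IsPath := by
        rw [Walk.cons_isPath_iff]; exact ⟨hq, huq⟩
      have e2 : w s(u,v) + (q.edges.map w).sum = K := by
        have := hK y hody_u (Walk.cons huv q) huy_path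
        simpa [Walk.edges_cons] using this
      have e3 : (q.edges.map w).sum = K' := hK' y hody_v q hq
      have hvx_path : (Walk.cons huv.symm p).IsPath := by
        rw [Walk.cons_isPath_iff]; exact ⟨hp, hvp⟩
      have e4 : w s(v,u) + (p.edges.map w).sum = K' := by
        have := hK' x hodx_v (Walk.cons huv.symm p) hvx_path
        simpa [Walk.edges_cons] using this
      have hsym : s(v,u) = s(u,v) := Sym2.eq_swap
      rw [hsym] at e4
      have hpos := hwpos s(u,v) (G.mem_edgeSet.mpr huv)
      have hR : ((w s(u,v) : NNReal) : ℝ) = 0 := by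
        have c1 := congrArg NNReal.toReal e1
        have c2 := congrArg NNReal.toReal e2
        have c3 := congrArg NNReal.toReal e3
        have c4 := congrArg NNReal.toReal e4
        push_cast at c1 c2 c3 c4
        linarith
      exact hpos.ne' (by exact_mod_cast hR)
    obtain ⟨a, b, hab⟩ := hadj
    by_cases ha1 : vdeg G a = 1
    · obtain ⟨h1, h2⟩ := star_of_key hG.isConnected hkey hab.symm ha1
      exact ⟨b, h1, h2⟩
    · have hb1 : vdeg G b = 1 := (hkey a b hab).resolve_left ha1
      obtain ⟨h1, h2⟩ := star_of_key hG.isConnected hkey hab hb1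
      exact ⟨a, h1, h2⟩
end
end
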